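/- Simulation property: let S relate extended states to pure states and T relate size-change graphs as defined. (i) If S(e':ρ', e:ρ) and e:ρ ⇓ e₀:ρ₀, G in the pure graph-generating environment semantics, then there exist e₀':ρ₀' and G' with S(e₀':ρ₀', e₀:ρ₀) and T(G', G) such that e':ρ' ⇓ e₀':ρ₀', G' in the extended graph-generating environment semantics. (ii) If S(e':ρ', e:ρ) and e:ρ →x e₀:ρ₀, G with x ∈ {r,d,c}, then there exist e₀':ρ₀', G' and possibly a state s such that either e':ρ' →x e₀':ρ₀', G' or e':ρ' →n s →x e₀':ρ₀', G', with S(e₀':ρ₀', e₀:ρ₀), T(G', G), and in the latter case S(s, e:ρ); moreover in the latter case the composite size-change graph of the double call has the same arcs as G' (since the →n call generates an identity-style graph). -/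

import Mathlib

/- Pure untyped λ-expressions. -/
inductive Exp : Type
  | var : String → Exp
  | app : Exp → Exp → Exp
  | lam : String → Exp → Exp
deriving DecidableEq

namespace Exp
/-- Free variables of a pure λ-expression. -/
def fv : Exp → Finset String
  | var x => {x}
  | app e1 e2 => fv e1 ∪ fv e2
  | lam x e => fv e \ {x}
end Exp

/- Γ-extended λ-expressions: variables, nonterminals, applications and
abstractions. -/
inductive ExpE : Type
  | var : String → ExpE
  | app : ExpE → ExpE → ExpE
  | lam : String → ExpE → ExpE
  | nt : String → ExpE
deriving DecidableEq

/-- A λ-regular grammar `Γ = (N, Π)`: a finite set of nonterminals and a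
finite set of productions `A ::= e`; we assume (as in the paper) that no
production has the form `A ::= A'` with `A'` a nonterminal. -/
structure Grammar where
  N : Set String
  prods : Set (String × ExpE)
  finN : N.Finite
  finProds : prods.Finite
  prods_mem : ∀ p ∈ prods, p.1 ∈ N
  no_nt_prod : ∀ p ∈ prods, ∀ A : String, p.2 ≠ ExpE.nt A

/-- The derivation relation `e ⇒*_Γ t`, relating Γ-extended expressions to the
pure λ-expressions obtained by replacing every nonterminal occurrence
(independently) by a λ-expression it derives via the productions. -/
inductive Deriv (Γ : Grammar) : ExpE → Exp → Prop
  | var (x : String) : Deriv Γ (ExpE.var x) (Exp.var x)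
  | app {a1 a2 : ExpE} {t1 t2 : Exp} :
      Deriv Γ a1 t1 → Deriv Γ a2 t2 → Deriv Γ (ExpE.app a1 a2) (Exp.app t1 t2)
  | lam {x : String} {a : ExpE} {t : Exp} :
      Deriv Γ a t → Deriv Γ (ExpE.lam x a) (Exp.lam x t)
  | nt {A : String} {e : ExpE} {t : Exp} :
      (A, e) ∈ Γ.prods → Deriv Γ e t → Deriv Γ (ExpE.nt A) t

/-- Free variables of a Γ-extended expression:
`fv(e) = { x | ∃t, e ⇒*_Γ t and x ∈ fv(t) }`. -/
def fvE (Γ : Grammar) (e : ExpE) : Set String :=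
  {x | ∃ t, Deriv Γ e t ∧ x ∈ Exp.fv t}
/- Values (closures), environments and states of the (pure)
environment-based semantics. -/
inductive Val : Type
  | clos : String → Exp → (String → Option Val) → Val

abbrev Env := String → Option Val
abbrev State := Exp × Env

/-- A value `λx.e:ρ` viewed as a state. -/
def Val.toState : Val → State
  | .clos x e ρ => (Exp.lam x e, ρ)

/-- The λ-expression component of a value. -/
def Val.toExp : Val → Exp
  | .clos x e _ => Exp.lam x e

def Env.update (ρ : Env) (x : String) (v : Val) : Env :=
  fun y => if y = x then some v else ρ y

def Env.empty : Env := fun _ => none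
/-- Arc labels: `=` (eq) and `↓` (dec). -/
inductive Lab : Type
  | eq : Lab
  | dec : Lab
deriving DecidableEq

/-- Name paths; here the nodes of generated size-change graphs are `ε = []`
or single variables `[y]`. -/
abbrev NP := List String
abbrev Arc := NP × Lab × NP
abbrev ArcSet := Set Arc

/-- `id= = {ε =→ ε} ∪ {y =→ y | y ∈ s}`. -/
def idEqS (s : Set String) : ArcSet :=
  {a | a = ([], Lab.eq, []) ∨ ∃ y ∈ s, a = ([y], Lab.eq, [y])}

/-- `id↓ = {ε ↓→ ε} ∪ {y =→ y | y ∈ s}`. -/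
def idDecS (s : Set String) : ArcSet :=
  {a | a = ([], Lab.dec, []) ∨ ∃ y ∈ s, a = ([y], Lab.eq, [y])}

/-- The graph `{x =→ ε} ∪ {x ↓→ y | y ∈ s}` of the variable rule. -/
def varGraphS (x : String) (s : Set String) : ArcSet :=
  {a | a = ([x], Lab.eq, []) ∨ ∃ y ∈ s, a = ([x], Lab.dec, [y])}

/-- `G₁^{-ε/λx.e₀}`: keep arcs between variables, replace `ε r→ z` (`z` a
variable) by `ε ↓→ z`, and, when `x ∉ fv(e₀)`, additionally replace each
arc `p r→ ε` by `p ↓→ ε`.  (`fve0` is `fv(e₀)`.) -/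
def GminusS (x : String) (fve0 : Set String) (G1 : ArcSet) : ArcSet :=
  {a | (∃ (y : String) (r : Lab) (z : String), a = ([y], r, [z]) ∧ ([y], r, [z]) ∈ G1) ∨
       (∃ z : String, a = (([] : NP), Lab.dec, [z]) ∧ ∃ r, (([] : NP), r, [z]) ∈ G1) ∨
       (x ∉ fve0 ∧ ∃ p : NP, a = (p, Lab.dec, ([] : NP)) ∧ ∃ r, (p, r, ([] : NP)) ∈ G1)}

/-- `G₂^{ε↦x}`: `y r→ x` for each `y r→ ε ∈ G₂`, and `ε ↓→ x` for each
`ε r→ ε ∈ G₂`. -/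
def GepsS (x : String) (G2 : ArcSet) : ArcSet :=
  {a | (∃ (y : String) (r : Lab), a = ([y], r, [x]) ∧ ([y], r, ([] : NP)) ∈ G2) ∨
       (a = (([] : NP), Lab.dec, [x]) ∧ ∃ r, (([] : NP), r, ([] : NP)) ∈ G2)}

/-- `∪_{e₀}`: union restricted to arcs whose target is in `fv(e₀) ∪ {ε}`. -/
def unionRS (fve0 : Set String) (A B : ArcSet) : ArcSet :=
  {a | a ∈ A ∪ B ∧ (a.2.2 = ([] : NP) ∨ ∃ y ∈ fve0, a.2.2 = [y])}

/-- The label set `R(x,z)` used in graph composition. -/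
def labelsA (G1 G2 : ArcSet) (x z : NP) : Set Lab :=
  {r | ∃ y s, ((x, r, y) ∈ G1 ∧ (y, s, z) ∈ G2) ∨
              ((x, s, y) ∈ G1 ∧ (y, r, z) ∈ G2)}

/-- Composition `G₁;G₂` of size-change graphs (as arc sets): `x ↓→ z` whenever
`↓ ∈ R(x,z)`, and `x =→ z` whenever `R(x,z) = {=}`. -/
def compA (G1 G2 : ArcSet) : ArcSet :=
  {a | (∃ x z, a = (x, Lab.dec, z) ∧ Lab.dec ∈ labelsA G1 G2 x z) ∨
       (∃ x z, a = (x, Lab.eq, z) ∧ labelsA G1 G2 x z = {Lab.eq})}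
/- The graph-generating environment semantics:
judgements `e:ρ ⇓ v, G` and `e:ρ →x e':ρ', G` (x ∈ {r,d,c}). -/
mutual
  inductive EvalG : State → Val → ArcSet → Prop
    | value (x : String) (e : Exp) (ρ : Env) :
        EvalG (Exp.lam x e, ρ) (Val.clos x e ρ) (idEqS ↑(Exp.lam x e).fv)
    | var {ρ : Env} {x : String} {v : Val} :
        ρ x = some v → EvalG (Exp.var x, ρ) v (varGraphS x ↑v.toExp.fv)
    | apply {s s' : State} {v : Val} {G' G : ArcSet} :
        CallGc s s' G' → EvalG s' v G → EvalG s v (compA G' G)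
  inductive CallGc : State → State → ArcSet → Prop
    | call {e1 e2 : Exp} {ρ ρ0 : Env} {x : String} {e0 : Exp} {v2 : Val}
        {G1 G2 : ArcSet} :
        EvalG (e1, ρ) (Val.clos x e0 ρ0) G1 → EvalG (e2, ρ) v2 G2 →
        CallGc (Exp.app e1 e2, ρ) (e0, Env.update ρ0 x v2)
          (unionRS ↑e0.fv (GminusS x ↑e0.fv G1) (GepsS x G2))
end

inductive CallGr : State → State → ArcSet → Prop
  | oper (e1 e2 : Exp) (ρ : Env) :
      CallGr (Exp.app e1 e2, ρ) (e1, ρ) (idDecS ↑e1.fv)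

inductive CallGd : State → State → ArcSet → Prop
  | opnd {e1 : Exp} {ρ : Env} {v1 : Val} {G1 : ArcSet} (e2 : Exp) :
      EvalG (e1, ρ) v1 G1 → CallGd (Exp.app e1 e2, ρ) (e2, ρ) (idDecS ↑e2.fv)

/-- The graph-generating call relation (union of `→r`, `→d`, `→c`). -/
def CallGAny (s s' : State) (G : ArcSet) : Prop :=
  CallGr s s' G ∨ CallGd s s' G ∨ CallGc s s' G
/- Values, environments and states of the Γ-extended environment-based
semantics. -/
inductive ValE : Type
  | clos : String → ExpE → (String → Option ValE) → ValE

abbrev EnvE := String → Option ValE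
abbrev StateE := ExpE × EnvE

/-- An extended value `λx.e:ρ` viewed as an extended state. -/
def ValE.toState : ValE → StateE
  | .clos x e ρ => (ExpE.lam x e, ρ)

/-- The extended-λ-expression component of an extended value. -/
def ValE.toExp : ValE → ExpE
  | .clos x e _ => ExpE.lam x e

def EnvE.update (ρ : EnvE) (x : String) (v : ValE) : EnvE :=
  fun y => if y = x then some v else ρ y

def EnvE.empty : EnvE := fun _ => none
/- The extended graph-generating environment semantics (on Γ-extended
expressions), with the (GramG) rule `A:ρ →n e:ρ` for productions `A ::= e`,
and the (ResultG) rule composing graphs along `→c` and `→n` calls. -/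
inductive CallXn (Γ : Grammar) : StateE → StateE → ArcSet → Prop
  | gram {A : String} {e : ExpE} (ρ : EnvE) :
      (A, e) ∈ Γ.prods → CallXn Γ (ExpE.nt A, ρ) (e, ρ) (idEqS (fvE Γ e))

mutual
  inductive EvalX (Γ : Grammar) : StateE → ValE → ArcSet → Prop
    | value (x : String) (e : ExpE) (ρ : EnvE) :
        EvalX Γ (ExpE.lam x e, ρ) (ValE.clos x e ρ) (idEqS (fvE Γ (ExpE.lam x e)))
    | var {ρ : EnvE} {x : String} {v : ValE} :
        ρ x = some v → EvalX Γ (ExpE.var x, ρ) v (varGraphS x (fvE Γ v.toExp))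
    | resultC {s s' : StateE} {v : ValE} {G' G : ArcSet} :
        CallXc Γ s s' G' → EvalX Γ s' v G → EvalX Γ s v (compA G' G)
    | resultN {s s' : StateE} {v : ValE} {G' G : ArcSet} :
        CallXn Γ s s' G' → EvalX Γ s' v G → EvalX Γ s v (compA G' G)
  inductive CallXc (Γ : Grammar) : StateE → StateE → ArcSet → Prop
    | call {e1 e2 : ExpE} {ρ ρ0 : EnvE} {x : String} {e0 : ExpE} {v2 : ValE}
        {G1 G2 : ArcSet} :
        EvalX Γ (e1, ρ) (ValE.clos x e0 ρ0) G1 → EvalX Γ (e2, ρ) v2 G2 →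
        CallXc Γ (ExpE.app e1 e2, ρ) (e0, EnvE.update ρ0 x v2)
          (unionRS (fvE Γ e0) (GminusS x (fvE Γ e0) G1) (GepsS x G2))
end

inductive CallXr (Γ : Grammar) : StateE → StateE → ArcSet → Prop
  | oper (e1 e2 : ExpE) (ρ : EnvE) :
      CallXr Γ (ExpE.app e1 e2, ρ) (e1, ρ) (idDecS (fvE Γ e1))

inductive CallXd (Γ : Grammar) : StateE → StateE → ArcSet → Prop
  | opnd {e1 : ExpE} {ρ : EnvE} {v1 : ValE} {G1 : ArcSet} (e2 : ExpE) :
      EvalX Γ (e1, ρ) v1 G1 → CallXd Γ (ExpE.app e1 e2, ρ) (e2, ρ) (idDecS (fvE Γ e2))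

/-- Kinds of calls: Operator (`r`), Operand (`d`), Call (`c`). -/
inductive CKind : Type
  | r : CKind
  | d : CKind
  | c : CKind

/-- The pure graph-generating call relation `→x`, indexed by kind. -/
def CallGk : CKind → State → State → ArcSet → Prop
  | CKind.r => CallGr
  | CKind.d => CallGd
  | CKind.c => CallGc

/-- The extended graph-generating call relation `→x`, indexed by kind
(`→n` is `CallXn`). -/
def CallXk (Γ : Grammar) : CKind → StateE → StateE → ArcSet → Prop
  | CKind.r => CallXr Γ
  | CKind.d => CallXd Γ
  | CKind.c => CallXc Γ

/-- The relation `S` between extended states and pure states: the smallest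
relation with `S(e':ρ', e:ρ)` whenever `e' ⇒*_Γ e` and `S(ρ'(x), ρ(x))` for
all `x ∈ fv(e)`. -/
inductive SRel (Γ : Grammar) : StateE → State → Prop
  | mk {e' : ExpE} {e : Exp} {ρ' : EnvE} {ρ : Env} :
      Deriv Γ e' e →
      (∀ x ∈ Exp.fv e, (ρ' x).isSome ∧ (ρ x).isSome) →
      (∀ x ∈ Exp.fv e, ∀ (v' : ValE) (v : Val),
        ρ' x = some v' → ρ x = some v → SRel Γ v'.toState v.toState) →
      SRel Γ (e', ρ') (e, ρ)

/-- The node set `{ε} ∪ { [x] | x ∈ s }` determined by a set of variables. -/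
def nps (s : Set String) : Set NP :=
  insert ([] : NP) {p | ∃ x ∈ s, p = [x]}

/-- The relation `T(G',G)` between size-change graphs (with the indicated
source and target sets): `source(G') ⊇ source(G)`, `target(G') ⊇ target(G)`,
the restriction of `G'` to `source(G)` and `target(G)` is a subset of `G`,
every `z ∈ source(G') ∖ source(G)` has no arc from `z` in `G'` except
possibly `z =→ z`, and whenever `z =→ z ∈ G'` (for such `z`), `z ∉ target(G)`. -/
def TRel (src' tgt' src tgt : Set NP) (G' G : ArcSet) : Prop :=
  src ⊆ src' ∧ tgt ⊆ tgt' ∧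
  (∀ a ∈ G', a.1 ∈ src → a.2.2 ∈ tgt → a ∈ G) ∧
  (∀ z ∈ src', z ∉ src →
    (∀ a ∈ G', a.1 = z → a = (z, Lab.eq, z)) ∧
    ((z, Lab.eq, z) ∈ G' → z ∉ tgt))

/- ===== Auxiliary development ===== -/

def sizeE : Exp → ℕ
  | .var _ => 1
  | .app e1 e2 => sizeE e1 + sizeE e2 + 1
  | .lam _ e => sizeE e + 1

noncomputable def muV : Val → ℕ :=
  Val.rec (motive_1 := fun _ => ℕ) (motive_2 := fun _ => ℕ)
    (fun x e _ρ ih => sizeE (Exp.lam x e) + ∑ y ∈ (Exp.lam x e).fv, ih y)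
    0 (fun _ ih => ih)

noncomputable def muO : Option Val → ℕ
  | some v => muV v
  | none => 0

lemma muV_clos (x : String) (e : Exp) (ρ : String → Option Val) :
    muV (Val.clos x e ρ) = sizeE (Exp.lam x e) + ∑ y ∈ (Exp.lam x e).fv, muO (ρ y) := by
  show (sizeE (Exp.lam x e) + ∑ y ∈ (Exp.lam x e).fv, _) = _
  congr 1
  apply Finset.sum_congr rfl
  intro y _
  cases h : ρ y <;> simp [muO, h, muV]

noncomputable def muS (s : State) : ℕ := sizeE s.1 + ∑ y ∈ s.1.fv, muO (s.2 y)

lemma muV_toState (v : Val) : muV v = muS v.toState := by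
  cases v with
  | clos x e ρ => simp [Val.toState, muS, muV_clos]

/-- The measure of a node of a size-change graph, relative to a state. -/
noncomputable def mN (s : State) : NP → ℕ
  | [] => muS s
  | y :: _ => muO (s.2 y)

lemma sizeE_pos (e : Exp) : 0 < sizeE e := by
  cases e <;> simp [sizeE] <;> omega

lemma muS_app_left (e1 e2 : Exp) (ρ : Env) : muS (e1, ρ) < muS (Exp.app e1 e2, ρ) := by
  have h1 : (Exp.fv e1) ⊆ (Exp.app e1 e2).fv := by
    intro a ha; simp [Exp.fv]; exact Or.inl ha
  have hs : ∑ y ∈ e1.fv, muO (ρ y) ≤ ∑ y ∈ (Exp.app e1 e2).fv, muO (ρ y) :=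
    Finset.sum_le_sum_of_subset h1
  have h2 : sizeE e1 < sizeE (Exp.app e1 e2) := by
    have := sizeE_pos e2; simp [sizeE]
  simp only [muS]; omega

lemma muS_app_right (e1 e2 : Exp) (ρ : Env) : muS (e2, ρ) < muS (Exp.app e1 e2, ρ) := by
  have h1 : (Exp.fv e2) ⊆ (Exp.app e1 e2).fv := by
    intro a ha; simp [Exp.fv]; exact Or.inr ha
  have hs : ∑ y ∈ e2.fv, muO (ρ y) ≤ ∑ y ∈ (Exp.app e1 e2).fv, muO (ρ y) :=
    Finset.sum_le_sum_of_subset h1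
  have h2 : sizeE e2 < sizeE (Exp.app e1 e2) := by
    have := sizeE_pos e1; simp [sizeE]
  simp only [muS]; omega

lemma muV_gt_fv {x : String} {e : Exp} {ρv : String → Option Val} {y : String}
    (hy : y ∈ (Exp.lam x e).fv) : muO (ρv y) < muV (Val.clos x e ρv) := by
  rw [muV_clos]
  have hs : muO (ρv y) ≤ ∑ y ∈ (Exp.lam x e).fv, muO (ρv y) :=
    Finset.single_le_sum (f := fun y => muO (ρv y)) (fun i _ => Nat.zero_le _) hy
  have := sizeE_pos (Exp.lam x e)
  omega

lemma muS_body_lt {x : String} {e0 : Exp} {ρ0 : Env} {v2 : Val}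
    (hx : x ∉ e0.fv) : muS (e0, Env.update ρ0 x v2) < muV (Val.clos x e0 ρ0) := by
  rw [muV_clos]
  have hfv : (Exp.lam x e0).fv = e0.fv := by
    ext z
    simp only [Exp.fv, Finset.mem_sdiff, Finset.mem_singleton]
    exact ⟨fun h => h.1, fun h => ⟨h, fun hzx => hx (hzx ▸ h)⟩⟩
  rw [hfv]
  have hsum : ∑ y ∈ e0.fv, muO (Env.update ρ0 x v2 y) = ∑ y ∈ e0.fv, muO (ρ0 y) := by
    apply Finset.sum_congr rfl
    intro y hy
    have : y ≠ x := fun h => hx (h ▸ hy)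
    simp [Env.update, this]
  simp only [muS]
  rw [hsum]
  have : sizeE e0 < sizeE (Exp.lam x e0) := by simp [sizeE]
  omega

/-- Soundness of a size-change graph with respect to node measures. -/
def SoundG (G : ArcSet) (f g : NP → ℕ) : Prop :=
  ∀ p r q, (p, r, q) ∈ G → (r = Lab.eq → f p = g q) ∧ (r = Lab.dec → g q < f p)

lemma lab_cases (r : Lab) : r = Lab.eq ∨ r = Lab.dec := by cases r <;> simp

/- nps lemmas -/
lemma mem_nps {s : Set String} {p : NP} : p ∈ nps s ↔ p = [] ∨ ∃ x ∈ s, p = [x] := by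
  simp [nps, Set.mem_insert_iff, Set.mem_setOf_eq]

lemma nil_mem_nps (s : Set String) : ([] : NP) ∈ nps s := by simp [mem_nps]

lemma cons_mem_nps {s : Set String} {x : String} : ([x] : NP) ∈ nps s ↔ x ∈ s := by
  simp [mem_nps]

lemma nps_mono {s t : Set String} (h : s ⊆ t) : nps s ⊆ nps t := by
  intro p hp
  rcases mem_nps.1 hp with h0 | ⟨x, hx, rfl⟩
  · exact h0 ▸ nil_mem_nps t
  · exact cons_mem_nps.2 (h hx)

lemma of_nps_subset {s t : Set String} (h : nps s ⊆ nps t) : s ⊆ t := by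
  intro x hx
  exact cons_mem_nps.1 (h (cons_mem_nps.2 hx))

/- fvE lemmas -/
lemma fv_subset_fvE {Γ : Grammar} {e' : ExpE} {e : Exp} (h : Deriv Γ e' e) :
    ↑e.fv ⊆ fvE Γ e' := by
  intro x hx
  exact ⟨e, h, hx⟩

lemma fvE_var (Γ : Grammar) (x : String) : fvE Γ (ExpE.var x) = {x} := by
  ext y
  constructor
  · rintro ⟨t, ht, hy⟩
    cases ht
    simpa [Exp.fv] using hy
  · rintro rfl
    exact ⟨Exp.var y, Deriv.var y, by simp [Exp.fv]⟩

lemma not_mem_fvE_lam (Γ : Grammar) (x : String) (a : ExpE) : x ∉ fvE Γ (ExpE.lam x a) := by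
  rintro ⟨t, ht, hx⟩
  cases ht with
  | lam h => simp [Exp.fv] at hx

lemma fvE_app_left {Γ : Grammar} {a1 a2 : ExpE} {t2 : Exp} (h2 : Deriv Γ a2 t2) :
    fvE Γ a1 ⊆ fvE Γ (ExpE.app a1 a2) := by
  rintro x ⟨t1, ht1, hx⟩
  exact ⟨Exp.app t1 t2, Deriv.app ht1 h2, by simp [Exp.fv]; exact Or.inl hx⟩

lemma fvE_app_right {Γ : Grammar} {a1 a2 : ExpE} {t1 : Exp} (h1 : Deriv Γ a1 t1) :
    fvE Γ a2 ⊆ fvE Γ (ExpE.app a1 a2) := by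
  rintro x ⟨t2, ht2, hx⟩
  exact ⟨Exp.app t1 t2, Deriv.app h1 ht2, by simp [Exp.fv]; exact Or.inr hx⟩

lemma fvE_app_eq {Γ : Grammar} {a1 a2 : ExpE} {t1 t2 : Exp}
    (h1 : Deriv Γ a1 t1) (h2 : Deriv Γ a2 t2) :
    fvE Γ (ExpE.app a1 a2) = fvE Γ a1 ∪ fvE Γ a2 := by
  ext x
  constructor
  · rintro ⟨t, ht, hx⟩
    cases ht with
    | app hl hr =>
      simp [Exp.fv] at hx
      rcases hx with hx | hx
      · exact Or.inl ⟨_, hl, hx⟩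
      · exact Or.inr ⟨_, hr, hx⟩
  · rintro (hx | hx)
    · exact fvE_app_left h2 hx
    · exact fvE_app_right h1 hx

lemma fvE_nt {Γ : Grammar} {A : String} {b : ExpE} (h : (A, b) ∈ Γ.prods) :
    fvE Γ b ⊆ fvE Γ (ExpE.nt A) := by
  rintro x ⟨t, ht, hx⟩
  exact ⟨t, Deriv.nt h ht, hx⟩
/- ===== Graph lemmas ===== -/

def wfSrc (G : ArcSet) (S : Set NP) : Prop := ∀ a ∈ G, a.1 ∈ S
def wfTgt (G : ArcSet) (T : Set NP) : Prop := ∀ a ∈ G, a.2.2 ∈ T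
def CFree (G : ArcSet) : Prop := ∀ p q, ¬((p, Lab.eq, q) ∈ G ∧ (p, Lab.dec, q) ∈ G)

lemma mem_idEqS {s : Set String} {a : Arc} :
    a ∈ idEqS s ↔ a = ([], Lab.eq, []) ∨ ∃ y ∈ s, a = ([y], Lab.eq, [y]) := Iff.rfl
lemma mem_idDecS {s : Set String} {a : Arc} :
    a ∈ idDecS s ↔ a = ([], Lab.dec, []) ∨ ∃ y ∈ s, a = ([y], Lab.eq, [y]) := Iff.rfl
lemma mem_varGraphS {x : String} {s : Set String} {a : Arc} :
    a ∈ varGraphS x s ↔ a = ([x], Lab.eq, []) ∨ ∃ y ∈ s, a = ([x], Lab.dec, [y]) := Iff.rfl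
lemma mem_GminusS {x : String} {s : Set String} {G1 : ArcSet} {a : Arc} :
    a ∈ GminusS x s G1 ↔
      (∃ (y : String) (r : Lab) (z : String), a = ([y], r, [z]) ∧ ([y], r, [z]) ∈ G1) ∨
      (∃ z : String, a = (([] : NP), Lab.dec, [z]) ∧ ∃ r, (([] : NP), r, [z]) ∈ G1) ∨
      (x ∉ s ∧ ∃ p : NP, a = (p, Lab.dec, ([] : NP)) ∧ ∃ r, (p, r, ([] : NP)) ∈ G1) := Iff.rfl
lemma mem_GepsS {x : String} {G2 : ArcSet} {a : Arc} :
    a ∈ GepsS x G2 ↔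
      (∃ (y : String) (r : Lab), a = ([y], r, [x]) ∧ ([y], r, ([] : NP)) ∈ G2) ∨
      (a = (([] : NP), Lab.dec, [x]) ∧ ∃ r, (([] : NP), r, ([] : NP)) ∈ G2) := Iff.rfl
lemma mem_unionRS {s : Set String} {A B : ArcSet} {a : Arc} :
    a ∈ unionRS s A B ↔ (a ∈ A ∨ a ∈ B) ∧ (a.2.2 = ([] : NP) ∨ ∃ y ∈ s, a.2.2 = [y]) := Iff.rfl
lemma mem_labelsA {G1 G2 : ArcSet} {x z : NP} {r : Lab} :
    r ∈ labelsA G1 G2 x z ↔ ∃ y s, ((x, r, y) ∈ G1 ∧ (y, s, z) ∈ G2) ∨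
              ((x, s, y) ∈ G1 ∧ (y, r, z) ∈ G2) := Iff.rfl
lemma mem_compA {G1 G2 : ArcSet} {a : Arc} :
    a ∈ compA G1 G2 ↔ (∃ x z, a = (x, Lab.dec, z) ∧ Lab.dec ∈ labelsA G1 G2 x z) ∨
       (∃ x z, a = (x, Lab.eq, z) ∧ labelsA G1 G2 x z = {Lab.eq}) := Iff.rfl

lemma labelsA_left {G1 G2 : ArcSet} {p y q : NP} {r s : Lab}
    (h1 : (p, r, y) ∈ G1) (h2 : (y, s, q) ∈ G2) : r ∈ labelsA G1 G2 p q :=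
  ⟨y, s, Or.inl ⟨h1, h2⟩⟩
lemma labelsA_right {G1 G2 : ArcSet} {p y q : NP} {r s : Lab}
    (h1 : (p, r, y) ∈ G1) (h2 : (y, s, q) ∈ G2) : s ∈ labelsA G1 G2 p q :=
  ⟨y, r, Or.inr ⟨h1, h2⟩⟩

lemma compA_dec {G1 G2 : ArcSet} {p q : NP} (h : Lab.dec ∈ labelsA G1 G2 p q) :
    (p, Lab.dec, q) ∈ compA G1 G2 := mem_compA.2 (Or.inl ⟨p, q, rfl, h⟩)
lemma compA_eq {G1 G2 : ArcSet} {p q : NP} (h : labelsA G1 G2 p q = {Lab.eq}) :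
    (p, Lab.eq, q) ∈ compA G1 G2 := mem_compA.2 (Or.inr ⟨p, q, rfl, h⟩)

/-- Elimination for membership in a composition. -/
lemma compA_elim {G1 G2 : ArcSet} {a : Arc} (h : a ∈ compA G1 G2) :
    (a.2.1 = Lab.dec ∧ Lab.dec ∈ labelsA G1 G2 a.1 a.2.2) ∨
    (a.2.1 = Lab.eq ∧ labelsA G1 G2 a.1 a.2.2 = {Lab.eq}) := by
  rcases mem_compA.1 h with ⟨x, z, rfl, hl⟩ | ⟨x, z, rfl, hl⟩
  · exact Or.inl ⟨rfl, hl⟩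
  · exact Or.inr ⟨rfl, hl⟩

lemma compA_witness {G1 G2 : ArcSet} {a : Arc} (h : a ∈ compA G1 G2) :
    ∃ r y s, (a.1, r, y) ∈ G1 ∧ (y, s, a.2.2) ∈ G2 := by
  rcases compA_elim h with ⟨_, hl⟩ | ⟨_, hl⟩
  · rcases mem_labelsA.1 hl with ⟨y, s, ⟨h1, h2⟩ | ⟨h1, h2⟩⟩
    · exact ⟨_, y, _, h1, h2⟩
    · exact ⟨_, y, _, h1, h2⟩
  · have hmem : Lab.eq ∈ labelsA G1 G2 a.1 a.2.2 := by rw [hl]; rfl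
    rcases mem_labelsA.1 hmem with ⟨y, s, ⟨h1, h2⟩ | ⟨h1, h2⟩⟩
    · exact ⟨_, y, _, h1, h2⟩
    · exact ⟨_, y, _, h1, h2⟩

lemma wfSrc_compA {G1 G2 : ArcSet} {S : Set NP} (h : wfSrc G1 S) :
    wfSrc (compA G1 G2) S := by
  intro a ha
  obtain ⟨r, y, s, h1, _⟩ := compA_witness ha
  exact h (a.1, r, y) h1

lemma wfTgt_compA {G1 G2 : ArcSet} {T : Set NP} (h : wfTgt G2 T) :
    wfTgt (compA G1 G2) T := by
  intro a ha
  obtain ⟨r, y, s, _, h2⟩ := compA_witness ha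
  exact h (y, s, a.2.2) h2

lemma cfree_compA (G1 G2 : ArcSet) : CFree (compA G1 G2) := by
  rintro p q ⟨he, hd⟩
  rcases compA_elim he with ⟨h, _⟩ | ⟨_, hl⟩
  · simp at h
  · rcases compA_elim hd with ⟨_, hdl⟩ | ⟨h, _⟩
    · rw [hl] at hdl; simp at hdl
    · simp at h

lemma mem_idEqS_elim {s : Set String} {p : NP} {r : Lab} {q : NP}
    (h : (p, r, q) ∈ idEqS s) : p ∈ nps s ∧ r = Lab.eq ∧ q = p := by
  rcases mem_idEqS.1 h with heq | ⟨y, hy, heq⟩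
  · simp only [Prod.mk.injEq] at heq
    obtain ⟨rfl, rfl, rfl⟩ := heq
    exact ⟨nil_mem_nps s, rfl, rfl⟩
  · simp only [Prod.mk.injEq] at heq
    obtain ⟨rfl, rfl, rfl⟩ := heq
    exact ⟨cons_mem_nps.2 hy, rfl, rfl⟩

lemma idEqS_self {s : Set String} {p : NP} (h : p ∈ nps s) : (p, Lab.eq, p) ∈ idEqS s := by
  rcases mem_nps.1 h with rfl | ⟨x, hx, rfl⟩
  · exact mem_idEqS.2 (Or.inl rfl)
  · exact mem_idEqS.2 (Or.inr ⟨x, hx, rfl⟩)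

/-- Composition with an identity graph on the left is the identity, for graphs
with sources inside `nps s` and no conflicting arcs. -/
lemma compA_idEq {s : Set String} {H : ArcSet}
    (hs : wfSrc H (nps s)) (hcf : CFree H) : compA (idEqS s) H = H := by
  ext a
  obtain ⟨p, r, q⟩ := a
  constructor
  · intro ha
    rcases compA_elim ha with ⟨hlab, hl⟩ | ⟨hlab, hl⟩ <;> simp only at hlab hl <;> subst hlab
    · rcases mem_labelsA.1 hl with ⟨y, s1, ⟨h1, h2⟩ | ⟨h1, h2⟩⟩
      · obtain ⟨-, he, -⟩ := mem_idEqS_elim h1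
        simp at he
      · obtain ⟨-, -, hq⟩ := mem_idEqS_elim h1
        rwa [hq] at h2
    · have hmem : Lab.eq ∈ labelsA (idEqS s) H p q := by rw [hl]; rfl
      rcases mem_labelsA.1 hmem with ⟨y, s1, ⟨h1, h2⟩ | ⟨h1, h2⟩⟩
      · obtain ⟨-, -, hq⟩ := mem_idEqS_elim h1
        rw [hq] at h2
        have hs1 : s1 ∈ labelsA (idEqS s) H p q := labelsA_right (hq ▸ h1) h2
        rw [hl] at hs1
        simp at hs1
        rwa [hs1] at h2
      · obtain ⟨-, -, hq⟩ := mem_idEqS_elim h1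
        rwa [hq] at h2
  · intro ha
    have hid : (p, Lab.eq, p) ∈ idEqS s := idEqS_self (hs _ ha)
    rcases lab_cases r with rfl | rfl
    · apply compA_eq
      ext t
      simp only [Set.mem_singleton_iff]
      constructor
      · intro ht
        rcases mem_labelsA.1 ht with ⟨y, s1, ⟨h1, h2⟩ | ⟨h1, h2⟩⟩
        · exact (mem_idEqS_elim h1).2.1
        · obtain ⟨-, -, hq⟩ := mem_idEqS_elim h1
          rw [hq] at h2
          rcases lab_cases t with rfl | rfl
          · rfl
          · exact absurd ⟨ha, h2⟩ (hcf p q)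
      · rintro rfl
        exact labelsA_right hid ha
    · exact compA_dec (labelsA_right hid ha)

/- ===== TRel lemmas ===== -/

lemma TRel_idEq {S' T' S T : Set String} (hSS' : S ⊆ S') (hTT' : T ⊆ T') (hTS : T ⊆ S) :
    TRel (nps S') (nps T') (nps S) (nps T) (idEqS T') (idEqS T) := by
  refine ⟨nps_mono hSS', nps_mono hTT', ?_, ?_⟩
  · intro a ha h1 h2
    rcases mem_idEqS.1 ha with rfl | ⟨y, hy, rfl⟩
    · exact mem_idEqS.2 (Or.inl rfl)
    · exact mem_idEqS.2 (Or.inr ⟨y, cons_mem_nps.1 h2, rfl⟩)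
  · intro z hz hznot
    constructor
    · intro a ha haz
      obtain ⟨p, r, q⟩ := a
      simp only at haz
      subst haz
      obtain ⟨-, he, hq⟩ := mem_idEqS_elim ha
      rw [he, hq]
    · intro _ hztgt
      exact hznot (nps_mono hTS hztgt)

lemma TRel_idDec {S' T' S T : Set String} (hSS' : S ⊆ S') (hTT' : T ⊆ T') (hTS : T ⊆ S) :
    TRel (nps S') (nps T') (nps S) (nps T) (idDecS T') (idDecS T) := by
  refine ⟨nps_mono hSS', nps_mono hTT', ?_, ?_⟩
  · intro a ha h1 h2
    rcases mem_idDecS.1 ha with rfl | ⟨y, hy, rfl⟩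
    · exact mem_idDecS.2 (Or.inl rfl)
    · exact mem_idDecS.2 (Or.inr ⟨y, cons_mem_nps.1 h2, rfl⟩)
  · intro z hz hznot
    have hzne : z ≠ [] := fun h => hznot (h ▸ nil_mem_nps S)
    constructor
    · intro a ha haz
      rcases mem_idDecS.1 ha with rfl | ⟨y, hy, rfl⟩
      · exact absurd haz.symm (by simpa using hzne)
      · simp at haz
        simp [haz]
    · intro _ hztgt
      exact hznot (nps_mono hTS hztgt)

lemma TRel_varG {S' T' S T : Set String} {x : String}
    (hSS' : S ⊆ S') (hTT' : T ⊆ T') (hxS : x ∈ S) :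
    TRel (nps S') (nps T') (nps S) (nps T) (varGraphS x T') (varGraphS x T) := by
  refine ⟨nps_mono hSS', nps_mono hTT', ?_, ?_⟩
  · intro a ha h1 h2
    rcases mem_varGraphS.1 ha with rfl | ⟨y, hy, rfl⟩
    · exact mem_varGraphS.2 (Or.inl rfl)
    · exact mem_varGraphS.2 (Or.inr ⟨y, cons_mem_nps.1 h2, rfl⟩)
  · intro z hz hznot
    have hzx : z ≠ [x] := fun h => hznot (h ▸ cons_mem_nps.2 hxS)
    constructor
    · intro a ha haz
      rcases mem_varGraphS.1 ha with rfl | ⟨y, hy, rfl⟩ <;>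
        exact absurd haz.symm (by simpa using hzx)
    · intro hzz
      rcases mem_varGraphS.1 hzz with h | ⟨y, hy, h⟩
      · simp at h
        exact absurd h.1 hzx
      · simp at h

lemma TRel_enlarge_src {S' S'' : Set String} {T' S T : Set NP} {G' G : ArcSet}
    (h : TRel (nps S') T' S T G' G) (hw : wfSrc G' (nps S')) (hss : S' ⊆ S'') :
    TRel (nps S'') T' S T G' G := by
  obtain ⟨h1, h2, h3, h4⟩ := h
  refine ⟨h1.trans (nps_mono hss), h2, h3, ?_⟩
  intro z hz hznot
  by_cases hz' : z ∈ nps S'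
  · exact h4 z hz' hznot
  · constructor
    · intro a ha haz
      exact absurd (haz ▸ hw a ha) hz'
    · intro hzz
      exact absurd (hw _ hzz) hz'
/- ===== Composition preserves TRel ===== -/

lemma sound_pair {G1 G2 : ArcSet} {f g h : NP → ℕ} {p y q : NP} {r1 r2 : Lab}
    (s1 : SoundG G1 f g) (s2 : SoundG G2 g h)
    (ha : (p, r1, y) ∈ G1) (hb : (y, r2, q) ∈ G2) :
    (r1 = Lab.eq → r2 = Lab.eq → f p = h q) ∧
    ((r1 = Lab.dec ∨ r2 = Lab.dec) → h q < f p) := by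
  obtain ⟨e1, d1⟩ := s1 _ _ _ ha
  obtain ⟨e2, d2⟩ := s2 _ _ _ hb
  constructor
  · intro h1 h2
    rw [e1 h1, e2 h2]
  · intro hd
    rcases lab_cases r1 with rfl | rfl
    · rcases hd with hd | hd
      · simp at hd
      · rw [e1 rfl]; exact d2 hd
    · rcases lab_cases r2 with rfl | rfl
      · rw [← e2 rfl]; exact d1 rfl
      · exact lt_trans (d2 rfl) (d1 rfl)

/-- The key lemma: `T` is preserved by composition of size-change graphs,
given target well-formedness of the first extended graph and soundness of the
two pure graphs (with a common middle measure). -/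
lemma TRel_compA {S1' T1' S1 T1 T2' T2 : Set NP} {Gc' Gc Gx' Gx : ArcSet}
    {m1 m2 m3 : NP → ℕ}
    (h1 : TRel S1' T1' S1 T1 Gc' Gc) (h2 : TRel T1' T2' T1 T2 Gx' Gx)
    (hwt : wfTgt Gc' T1')
    (sc : SoundG Gc m1 m2) (sx : SoundG Gx m2 m3) :
    TRel S1' T2' S1 T2 (compA Gc' Gx') (compA Gc Gx) := by
  obtain ⟨h11, h12, h13, h14⟩ := h1
  obtain ⟨h21, h22, h23, h24⟩ := h2
  -- middle nodes of witnessing paths whose endpoint is in T2 are in T1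
  have mid : ∀ {p r y s q}, (p, r, y) ∈ Gc' → (y, s, q) ∈ Gx' → q ∈ T2 → y ∈ T1 := by
    intro p r y s q hc hx hq
    by_contra hy
    have hy' : y ∈ T1' := hwt _ hc
    obtain ⟨hself, hnt⟩ := h24 y hy' hy
    have heq := hself _ hx rfl
    simp only [Prod.mk.injEq] at heq
    obtain ⟨-, hrs, hqy⟩ := heq
    rw [hqy] at hq
    exact (hnt (by rw [hrs, hqy] at hx; exact hx)) hq
  refine ⟨h11, h22, ?_, ?_⟩
  · -- restriction condition
    rintro ⟨p, r, q⟩ ha hp hq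
    simp only at hp hq
    rcases compA_elim ha with ⟨hlab, hl⟩ | ⟨hlab, hl⟩ <;> simp only at hlab hl <;> subst hlab
    · -- dec arc
      rcases mem_labelsA.1 hl with ⟨y, s1, ⟨hc, hx⟩ | ⟨hc, hx⟩⟩
      · have hyT1 : y ∈ T1 := mid hc hx hq
        exact compA_dec (labelsA_left (h13 _ hc hp hyT1) (h23 _ hx hyT1 hq))
      · have hyT1 : y ∈ T1 := mid hc hx hq
        exact compA_dec (labelsA_right (h13 _ hc hp hyT1) (h23 _ hx hyT1 hq))
    · -- eq arc: labels' = {eq}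
      have hmem : Lab.eq ∈ labelsA Gc' Gx' p q := by rw [hl]; rfl
      -- extract an all-eq witness path
      obtain ⟨y, α, β, hc, hx⟩ : ∃ y α β, (p, α, y) ∈ Gc' ∧ (y, β, q) ∈ Gx' := by
        rcases mem_labelsA.1 hmem with ⟨y, s1, ⟨hc, hx⟩ | ⟨hc, hx⟩⟩
        · exact ⟨y, _, _, hc, hx⟩
        · exact ⟨y, _, _, hc, hx⟩
      have hα : α = Lab.eq := by
        have : α ∈ labelsA Gc' Gx' p q := labelsA_left hc hx
        rw [hl] at this; simpa using this
      have hβ : β = Lab.eq := by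
        have : β ∈ labelsA Gc' Gx' p q := labelsA_right hc hx
        rw [hl] at this; simpa using this
      subst hα; subst hβ
      have hyT1 : y ∈ T1 := mid hc hx hq
      have hcp := h13 _ hc hp hyT1
      have hxp := h23 _ hx hyT1 hq
      have heqm : m1 p = m3 q := (sound_pair sc sx hcp hxp).1 rfl rfl
      apply compA_eq
      ext t
      simp only [Set.mem_singleton_iff]
      constructor
      · intro ht
        rcases lab_cases t with rfl | rfl
        · rfl
        · exfalso
          rcases mem_labelsA.1 ht with ⟨y2, s2, ⟨hc2, hx2⟩ | ⟨hc2, hx2⟩⟩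
          · have := (sound_pair sc sx hc2 hx2).2 (Or.inl rfl); omega
          · have := (sound_pair sc sx hc2 hx2).2 (Or.inr rfl); omega
      · rintro rfl
        exact labelsA_left hcp hxp
  · -- new-source condition
    intro z hz hznot
    obtain ⟨hselfc, hntc⟩ := h14 z hz hznot
    have harcz : ∀ r q, (z, r, q) ∈ compA Gc' Gx' →
        r = Lab.eq ∧ q = z ∧ (z, Lab.eq, z) ∈ Gx' ∧ z ∈ T1' ∧ z ∉ T1 := by
      intro r q ha
      obtain ⟨r1, y, s1, hc, hx⟩ := compA_witness ha
      simp only at hc hx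
      have heqc := hselfc _ hc rfl
      simp only [Prod.mk.injEq] at heqc
      obtain ⟨-, hr1, hy⟩ := heqc
      rw [hy] at hc hx
      have hzT1' : z ∈ T1' := hwt _ hc
      have hzT1no : z ∉ T1 := hntc (by rw [hr1] at hc; exact hc)
      obtain ⟨hselfx, hntx⟩ := h24 z hzT1' hzT1no
      have heqx := hselfx _ hx rfl
      simp only [Prod.mk.injEq] at heqx
      obtain ⟨-, hs1, hq⟩ := heqx
      have hxz : (z, Lab.eq, z) ∈ Gx' := by rw [hs1, hq] at hx; exact hx
      refine ⟨?_, hq, hxz, hzT1', hzT1no⟩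
      rcases compA_elim ha with ⟨hlab, hl⟩ | ⟨hlab, hl⟩ <;> simp only at hlab hl
      · exfalso
        rcases mem_labelsA.1 hl with ⟨y2, s2, ⟨hc2, hx2⟩ | ⟨hc2, hx2⟩⟩
        · have h' := hselfc _ hc2 rfl
          simp only [Prod.mk.injEq] at h'
          exact absurd h'.2.1.symm (by simp)
        · have h'c := hselfc _ hc2 rfl
          simp only [Prod.mk.injEq] at h'c
          obtain ⟨-, -, hy2⟩ := h'c
          rw [hy2] at hx2
          have h'x := hselfx _ hx2 rfl
          simp only [Prod.mk.injEq] at h'x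
          exact absurd h'x.2.1.symm (by simp)
      · exact hlab
    constructor
    · rintro ⟨p0, r, q⟩ ha haz
      simp only at haz
      rw [haz] at ha
      obtain ⟨hr, hq, -, -, -⟩ := harcz r q ha
      simp [haz, hr, hq]
    · intro hzz
      obtain ⟨-, -, hxz, hzT1', hzT1no⟩ := harcz _ _ hzz
      exact (h24 z hzT1' hzT1no).2 hxz
/- ===== Well-formedness and soundness of the pure semantics ===== -/

def PureP (s : State) (v : Val) (G : ArcSet) : Prop :=
  wfTgt G (nps ↑v.toExp.fv) ∧ SoundG G (mN s) (mN v.toState)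

def PureC (s s2 : State) (G : ArcSet) : Prop :=
  wfTgt G (nps ↑s2.1.fv) ∧ SoundG G (mN s) (mN s2)

lemma mN_nil (s : State) : mN s [] = muS s := rfl
lemma mN_cons (s : State) (y : String) : mN s [y] = muO (s.2 y) := rfl

lemma pure_value (x : String) (e : Exp) (ρ : Env) :
    PureP (Exp.lam x e, ρ) (Val.clos x e ρ) (idEqS ↑(Exp.lam x e).fv) := by
  constructor
  · intro a ha
    rcases mem_idEqS.1 ha with rfl | ⟨y, hy, rfl⟩
    · exact nil_mem_nps _
    · exact cons_mem_nps.2 (by simpa [Val.toExp] using hy)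
  · intro p r q hpq
    obtain ⟨-, hr, hq⟩ := mem_idEqS_elim hpq
    subst hr
    refine ⟨fun _ => ?_, fun h => by simp at h⟩
    rw [hq]
    rfl

lemma pure_var {ρ : Env} {x : String} {v : Val} (h : ρ x = some v) :
    PureP (Exp.var x, ρ) v (varGraphS x ↑v.toExp.fv) := by
  constructor
  · intro a ha
    rcases mem_varGraphS.1 ha with rfl | ⟨y, hy, rfl⟩
    · exact nil_mem_nps _
    · exact cons_mem_nps.2 hy
  · intro p r q hpq
    rcases mem_varGraphS.1 hpq with heq | ⟨y, hy, heq⟩ <;>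
      simp only [Prod.mk.injEq] at heq <;> obtain ⟨rfl, rfl, rfl⟩ := heq
    · refine ⟨fun _ => ?_, fun hh => by simp at hh⟩
      rw [mN_cons, mN_nil]
      simp only [h, muO]
      rw [muV_toState]
    · refine ⟨fun hh => by simp at hh, fun _ => ?_⟩
      obtain ⟨xc, ec, ρc⟩ := v
      show mN (Val.clos xc ec ρc).toState [y] < mN (Exp.var x, ρ) [x]
      have h1 : mN (Val.clos xc ec ρc).toState [y] = muO (ρc y) := rfl
      have h2 : mN (Exp.var x, ρ) [x] = muO (ρ x) := rfl
      have h3 : muO (some (Val.clos xc ec ρc)) = muV (Val.clos xc ec ρc) := rfl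
      rw [h1, h2, h, h3]
      exact muV_gt_fv (by simpa [Val.toExp] using hy)

lemma pure_apply {s s2 : State} {v : Val} {G' G : ArcSet}
    (ih1 : PureC s s2 G') (ih2 : PureP s2 v G) : PureP s v (compA G' G) := by
  obtain ⟨w1, s1⟩ := ih1
  obtain ⟨w2, s2'⟩ := ih2
  constructor
  · exact wfTgt_compA w2
  · intro p r q hpq
    rcases compA_elim hpq with ⟨hlab, hl⟩ | ⟨hlab, hl⟩ <;> simp only at hlab hl <;> subst hlab
    · refine ⟨fun hh => by simp at hh, fun _ => ?_⟩
      rcases mem_labelsA.1 hl with ⟨y, t, ⟨h1, h2⟩ | ⟨h1, h2⟩⟩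
      · exact (sound_pair s1 s2' h1 h2).2 (Or.inl rfl)
      · exact (sound_pair s1 s2' h1 h2).2 (Or.inr rfl)
    · refine ⟨fun _ => ?_, fun hh => by simp at hh⟩
      have hmem : Lab.eq ∈ labelsA G' G p q := by rw [hl]; rfl
      obtain ⟨y, α, β, h1, h2⟩ : ∃ y α β, (p, α, y) ∈ G' ∧ (y, β, q) ∈ G := by
        rcases mem_labelsA.1 hmem with ⟨y, t, ⟨h1, h2⟩ | ⟨h1, h2⟩⟩
        · exact ⟨y, _, _, h1, h2⟩
        · exact ⟨y, _, _, h1, h2⟩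
      have hα : α = Lab.eq := by
        have : α ∈ labelsA G' G p q := labelsA_left h1 h2
        rw [hl] at this; simpa using this
      have hβ : β = Lab.eq := by
        have : β ∈ labelsA G' G p q := labelsA_right h1 h2
        rw [hl] at this; simpa using this
      subst hα; subst hβ
      exact (sound_pair s1 s2' h1 h2).1 rfl rfl

lemma pure_call {e1 e2 : Exp} {ρ ρ0 : Env} {x : String} {e0 : Exp} {v2 : Val}
    {G1 G2 : ArcSet}
    (ih1 : PureP (e1, ρ) (Val.clos x e0 ρ0) G1) (ih2 : PureP (e2, ρ) v2 G2) :
    PureC (Exp.app e1 e2, ρ) (e0, Env.update ρ0 x v2)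
      (unionRS ↑e0.fv (GminusS x ↑e0.fv G1) (GepsS x G2)) := by
  obtain ⟨w1, s1⟩ := ih1
  obtain ⟨w2, s2⟩ := ih2
  have hsrc_eq : ∀ y : String, mN (Exp.app e1 e2, ρ) [y] = mN (e1, ρ) [y] := fun _ => rfl
  have hsrc_eq2 : ∀ y : String, mN (Exp.app e1 e2, ρ) [y] = mN (e2, ρ) [y] := fun _ => rfl
  have htgt1 : ∀ z : String, z ∈ (Exp.lam x e0).fv →
      mN (e0, Env.update ρ0 x v2) [z] = mN (Val.clos x e0 ρ0).toState [z] := by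
    intro z hz
    have hzx : z ≠ x := by
      simp [Exp.fv] at hz
      exact hz.2
    simp [mN, Val.toState, Env.update, hzx]
  constructor
  · intro a ha
    obtain ⟨-, htc⟩ := mem_unionRS.1 ha
    rcases htc with h0 | ⟨y, hy, hy2⟩
    · rw [h0]; exact nil_mem_nps _
    · rw [hy2]; exact cons_mem_nps.2 hy
  · intro p r q hpq
    obtain ⟨hAB, htc⟩ := mem_unionRS.1 hpq
    rcases hAB with hA | hB
    · rcases mem_GminusS.1 hA with ⟨y, r', z, heq, harc⟩ | ⟨z, heq, r', harc⟩ |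
        ⟨hxe0, p', heq, r', harc⟩ <;> simp only [Prod.mk.injEq] at heq
      · -- variable-to-variable arc, inherited from G1
        obtain ⟨rfl, rfl, rfl⟩ := heq
        have hz : [z] ∈ nps ↑(Exp.lam x e0).fv := w1 _ harc
        have hz' := cons_mem_nps.1 hz
        simp only [Finset.mem_coe] at hz'
        obtain ⟨he, de⟩ := s1 _ _ _ harc
        refine ⟨fun hh => ?_, fun hh => ?_⟩
        · rw [hsrc_eq, htgt1 z (by simpa using hz')]
          exact he hh
        · rw [hsrc_eq, htgt1 z (by simpa using hz')]
          exact de hh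
      · -- ε to variable arc
        obtain ⟨rfl, rfl, rfl⟩ := heq
        refine ⟨fun hh => by simp at hh, fun _ => ?_⟩
        have hz : [z] ∈ nps ↑(Exp.lam x e0).fv := w1 _ harc
        have hz' := cons_mem_nps.1 hz
        obtain ⟨he, de⟩ := s1 _ _ _ harc
        have hle : mN (Val.clos x e0 ρ0).toState [z] ≤ mN (e1, ρ) [] := by
          rcases lab_cases r' with rfl | rfl
          · rw [he rfl]
          · exact le_of_lt (de rfl)
        have hlt : mN (e1, ρ) [] < mN (Exp.app e1 e2, ρ) [] := muS_app_left e1 e2 ρ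
        rw [htgt1 z (by simpa using hz')] at *
        omega
      · -- arc to ε (only when x ∉ fv e0)
        obtain ⟨rfl, rfl, rfl⟩ := heq
        refine ⟨fun hh => by simp at hh, fun _ => ?_⟩
        have hxe0' : x ∉ e0.fv := by simpa using hxe0
        obtain ⟨he, de⟩ := s1 _ _ _ harc
        have hle : mN (Val.clos x e0 ρ0).toState [] ≤ mN (e1, ρ) p := by
          rcases lab_cases r' with rfl | rfl
          · rw [he rfl]
          · exact le_of_lt (de rfl)
        have hle2 : mN (e1, ρ) p ≤ mN (Exp.app e1 e2, ρ) p := by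
          cases p with
          | nil => exact le_of_lt (muS_app_left e1 e2 ρ)
          | cons y t => exact le_of_eq rfl
        have hmid : mN (Val.clos x e0 ρ0).toState [] = muV (Val.clos x e0 ρ0) := by
          rw [mN_nil, muV_toState]
        have hbody : mN (e0, Env.update ρ0 x v2) [] < muV (Val.clos x e0 ρ0) := by
          rw [mN_nil]; exact muS_body_lt hxe0'
        omega
    · rcases mem_GepsS.1 hB with ⟨y, r', heq, harc⟩ | ⟨heq, r', harc⟩ <;>
        simp only [Prod.mk.injEq] at heq
      · -- y r x arc from operand graph
        obtain ⟨rfl, rfl, rfl⟩ := heq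
        obtain ⟨he, de⟩ := s2 _ _ _ harc
        have htx : mN (e0, Env.update ρ0 x v2) [x] = muV v2 := by
          simp [mN, Env.update, muO]
        have hv2 : mN v2.toState [] = muV v2 := by rw [mN_nil, muV_toState]
        refine ⟨fun hh => ?_, fun hh => ?_⟩
        · rw [hsrc_eq2, htx, ← hv2]
          exact he hh
        · rw [hsrc_eq2, htx, ← hv2]
          exact de hh
      · -- ε dec x arc
        obtain ⟨rfl, rfl, rfl⟩ := heq
        refine ⟨fun hh => by simp at hh, fun _ => ?_⟩
        obtain ⟨he, de⟩ := s2 _ _ _ harc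
        have hle : mN v2.toState [] ≤ mN (e2, ρ) [] := by
          rcases lab_cases r' with rfl | rfl
          · rw [he rfl]
          · exact le_of_lt (de rfl)
        have hlt : mN (e2, ρ) [] < mN (Exp.app e1 e2, ρ) [] := muS_app_right e1 e2 ρ
        have htx : mN (e0, Env.update ρ0 x v2) [x] = muV v2 := by
          simp [mN, Env.update, muO]
        have hv2 : mN v2.toState [] = muV v2 := by rw [mN_nil, muV_toState]
        omega

lemma pure_eval {s : State} {v : Val} {G : ArcSet} (h : EvalG s v G) : PureP s v G :=
  EvalG.rec (motive_1 := fun s v G _ => PureP s v G) (motive_2 := fun s s2 G _ => PureC s s2 G)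
    pure_value (fun h => pure_var h)
    (fun _ _ ih1 ih2 => pure_apply ih1 ih2)
    (fun _ _ ih1 ih2 => pure_call ih1 ih2) h

lemma pure_callc {s s2 : State} {G : ArcSet} (h : CallGc s s2 G) : PureC s s2 G :=
  CallGc.rec (motive_1 := fun s v G _ => PureP s v G) (motive_2 := fun s s2 G _ => PureC s s2 G)
    pure_value (fun h => pure_var h)
    (fun _ _ ih1 ih2 => pure_apply ih1 ih2)
    (fun _ _ ih1 ih2 => pure_call ih1 ih2) h
/- ===== Well-formedness of the extended call graph ===== -/

lemma wfTgt_unionR {s : Set String} {A B : ArcSet} : wfTgt (unionRS s A B) (nps s) := by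
  intro a ha
  obtain ⟨-, htc⟩ := mem_unionRS.1 ha
  rcases htc with h0 | ⟨y, hy, hy2⟩
  · rw [h0]; exact nil_mem_nps _
  · rw [hy2]; exact cons_mem_nps.2 hy

lemma wfSrc_call {x : String} {s : Set String} {G1 G2 : ArcSet} {S : Set NP}
    (h1 : wfSrc G1 S) (h2 : wfSrc G2 S) (hε : ([] : NP) ∈ S) :
    wfSrc (unionRS s (GminusS x s G1) (GepsS x G2)) S := by
  intro a ha
  obtain ⟨hAB, -⟩ := mem_unionRS.1 ha
  rcases hAB with hA | hB
  · rcases mem_GminusS.1 hA with ⟨y, r, z, heq, harc⟩ | ⟨z, heq, r, harc⟩ |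
      ⟨-, p, heq, r, harc⟩
    · rw [heq]; exact h1 ([y], r, [z]) harc
    · rw [heq]; exact hε
    · rw [heq]; exact h1 (p, r, ([] : NP)) harc
  · rcases mem_GepsS.1 hB with ⟨y, r, heq, harc⟩ | ⟨heq, r, harc⟩
    · rw [heq]; exact h2 ([y], r, ([] : NP)) harc
    · rw [heq]; exact hε

lemma list_single_inj {a b : String} (h : ([a] : NP) = [b]) : a = b := by
  simpa using h

lemma cfree_call {x : String} {s : Set String} {G1 G2 : ArcSet} {T1' : Set NP}
    (hw1 : wfTgt G1 T1') (hx : ([x] : NP) ∉ T1') (c1 : CFree G1) (c2 : CFree G2) :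
    CFree (unionRS s (GminusS x s G1) (GepsS x G2)) := by
  rintro p q ⟨he, hd⟩
  obtain ⟨heAB, -⟩ := mem_unionRS.1 he
  obtain ⟨hdAB, -⟩ := mem_unionRS.1 hd
  rcases heAB with heA | heB
  · rcases mem_GminusS.1 heA with ⟨y, r, z, heq, harc⟩ | ⟨z, heq, r, harc⟩ |
      ⟨-, p2, heq, r, harc⟩ <;> simp only [Prod.mk.injEq] at heq
    · -- eq arc ([y], eq, [z]) from G1
      obtain ⟨hp, hr, hq⟩ := heq
      rw [← hr] at harc
      rcases hdAB with hdA | hdB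
      · rcases mem_GminusS.1 hdA with ⟨y2, r2, z2, heq2, harc2⟩ | ⟨z2, heq2, r2, harc2⟩ |
          ⟨-, p3, heq2, r2, harc2⟩ <;> simp only [Prod.mk.injEq] at heq2
        · obtain ⟨hp2, hr2, hq2⟩ := heq2
          have hy2 : y2 = y := list_single_inj (hp2.symm.trans hp)
          have hz2 : z2 = z := list_single_inj (hq2.symm.trans hq)
          rw [hy2, hz2, ← hr2] at harc2
          exact c1 [y] [z] ⟨harc, harc2⟩
        · rw [heq2.1] at hp
          simp at hp
        · rw [heq2.2.2] at hq
          simp at hq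
      · rcases mem_GepsS.1 hdB with ⟨y2, r2, heq2, harc2⟩ | ⟨heq2, r2, harc2⟩ <;>
          simp only [Prod.mk.injEq] at heq2
        · have hzx : z = x := list_single_inj (hq.symm.trans heq2.2.2)
          rw [hzx] at harc
          exact hx (hw1 ([y], Lab.eq, [x]) harc)
        · rw [heq2.1] at hp
          simp at hp
    · exact absurd heq.2.1 (by simp)
    · exact absurd heq.2.1 (by simp)
  · rcases mem_GepsS.1 heB with ⟨y, r, heq, harc⟩ | ⟨heq, r, harc⟩ <;>
      simp only [Prod.mk.injEq] at heq
    · -- eq arc ([y], eq, [x]) from GepsS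
      obtain ⟨hp, hr, hq⟩ := heq
      rw [← hr] at harc
      rcases hdAB with hdA | hdB
      · rcases mem_GminusS.1 hdA with ⟨y2, r2, z2, heq2, harc2⟩ | ⟨z2, heq2, r2, harc2⟩ |
          ⟨-, p3, heq2, r2, harc2⟩ <;> simp only [Prod.mk.injEq] at heq2
        · have hz2 : z2 = x := list_single_inj (heq2.2.2.symm.trans hq)
          rw [hz2, ← heq2.2.1] at harc2
          exact hx (hw1 ([y2], Lab.dec, [x]) harc2)
        · rw [heq2.1] at hp
          simp at hp
        · rw [heq2.2.2] at hq
          simp at hq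
      · rcases mem_GepsS.1 hdB with ⟨y2, r2, heq2, harc2⟩ | ⟨heq2, r2, harc2⟩ <;>
          simp only [Prod.mk.injEq] at heq2
        · obtain ⟨hp2, hr2, -⟩ := heq2
          have hy2 : y2 = y := list_single_inj (hp2.symm.trans hp)
          rw [hy2, ← hr2] at harc2
          exact c2 [y] [] ⟨harc, harc2⟩
        · rw [heq2.1] at hp
          simp at hp
    · exact absurd heq.2.1 (by simp)
/- ===== TRel for the call graphs ===== -/

lemma TRel_call {x : String}
    {S1' S2' T1' E0' : Set String} {S1 S2 T1v E0 : Set String}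
    {G1' G1 G2' G2 : ArcSet} {V2' V2 : Set String}
    (hT1 : TRel (nps S1') (nps T1') (nps S1) (nps T1v) G1' G1)
    (hT2 : TRel (nps S2') (nps V2') (nps S2) (nps V2) G2' G2)
    (hwS1' : wfSrc G1' (nps S1')) (hwT1' : wfTgt G1' (nps T1'))
    (hwS2' : wfSrc G2' (nps S2'))
    (hxT1' : x ∉ T1')
    (hlam : T1v = E0 \ {x})
    (hE0sub : E0 ⊆ E0') :
    TRel (nps (S1' ∪ S2')) (nps E0') (nps (S1 ∪ S2)) (nps E0)
      (unionRS E0' (GminusS x E0' G1') (GepsS x G2'))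
      (unionRS E0 (GminusS x E0 G1) (GepsS x G2)) := by
  obtain ⟨h11, h12, h13, h14⟩ := hT1
  obtain ⟨h21, h22, h23, h24⟩ := hT2
  have hS1sub : S1 ⊆ S1' := of_nps_subset h11
  have hS2sub : S2 ⊆ S2' := of_nps_subset h21
  refine ⟨nps_mono (Set.union_subset_union hS1sub hS2sub), nps_mono hE0sub, ?_, ?_⟩
  · -- restriction
    rintro ⟨p, r, q⟩ ha hp hq
    simp only at hp hq
    obtain ⟨hAB, -⟩ := mem_unionRS.1 ha
    rcases hAB with hA | hB
    · rcases mem_GminusS.1 hA with ⟨y, r', z, heq, harc⟩ | ⟨z, heq, r', harc⟩ |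
        ⟨hxE0', p2, heq, r', harc⟩ <;> simp only [Prod.mk.injEq] at heq
      · -- variable-variable arc from G1'
        obtain ⟨hp', hr', hq'⟩ := heq
        subst hp'; subst hq'
        rw [← hr'] at harc
        have hzT1' : ([z] : NP) ∈ nps T1' := hwT1' ([y], r, [z]) harc
        have hzx : z ≠ x := by
          intro hzx
          rw [hzx] at hzT1'
          exact hxT1' (cons_mem_nps.1 hzT1')
        have hzE0 : z ∈ E0 := by
          rcases cons_mem_nps.1 hq with h; exact h
        have hzT1v : ([z] : NP) ∈ nps T1v := by
          rw [hlam]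
          exact cons_mem_nps.2 ⟨hzE0, by simp [hzx]⟩
        have hyS1 : y ∈ S1 := by
          by_contra hy
          have hyS1' : ([y] : NP) ∈ nps S1' := hwS1' _ harc
          obtain ⟨hself, hnt⟩ := h14 [y] hyS1' (fun hc => hy (cons_mem_nps.1 hc))
          have hse := hself _ harc rfl
          simp only [Prod.mk.injEq] at hse
          obtain ⟨-, hre, hzy⟩ := hse
          rw [hre, hzy] at harc
          rw [hzy] at hzT1v
          exact hnt harc hzT1v
        have harc1 : ([y], r, [z]) ∈ G1 := h13 _ harc (cons_mem_nps.2 hyS1) hzT1v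
        exact mem_unionRS.2 ⟨Or.inl (mem_GminusS.2 (Or.inl ⟨y, r, z, rfl, harc1⟩)),
          Or.inr ⟨z, hzE0, rfl⟩⟩
      · -- ε to variable arc
        obtain ⟨hp', hr', hq'⟩ := heq
        subst hp'; subst hq'; subst hr'
        have hzT1' : ([z] : NP) ∈ nps T1' := hwT1' (([] : NP), r', [z]) harc
        have hzx : z ≠ x := by
          intro hzx
          rw [hzx] at hzT1'
          exact hxT1' (cons_mem_nps.1 hzT1')
        have hzE0 : z ∈ E0 := cons_mem_nps.1 hq
        have hzT1v : ([z] : NP) ∈ nps T1v := by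
          rw [hlam]
          exact cons_mem_nps.2 ⟨hzE0, by simp [hzx]⟩
        have harc1 : (([] : NP), r', [z]) ∈ G1 := h13 _ harc (nil_mem_nps _) hzT1v
        exact mem_unionRS.2 ⟨Or.inl (mem_GminusS.2 (Or.inr (Or.inl ⟨z, rfl, r', harc1⟩))),
          Or.inr ⟨z, hzE0, rfl⟩⟩
      · -- arc to ε (x ∉ E0')
        obtain ⟨hp', hr', hq'⟩ := heq
        subst hp'; subst hq'; subst hr'
        have hxE0 : x ∉ E0 := fun hc => hxE0' (hE0sub hc)
        have hpS1 : p ∈ nps S1 := by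
          rcases mem_nps.1 hp with rfl | ⟨w, hw, rfl⟩
          · exact nil_mem_nps _
          · rcases (Set.mem_union _ _ _).1 hw with hw1 | hw2
            · exact cons_mem_nps.2 hw1
            · -- w ∈ S2 \ S1 : impossible since the arc has target ε
              by_cases hw1' : w ∈ S1
              · exact cons_mem_nps.2 hw1'
              · exfalso
                have hwS1'' : ([w] : NP) ∈ nps S1' := hwS1' _ harc
                obtain ⟨hself, -⟩ := h14 [w] hwS1'' (fun hc => hw1' (cons_mem_nps.1 hc))
                have := hself _ harc rfl
                simp only [Prod.mk.injEq] at this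
                exact absurd this.2.2 (by simp)
        have harc1 : (p, r', ([] : NP)) ∈ G1 := h13 _ harc hpS1 (nil_mem_nps _)
        exact mem_unionRS.2 ⟨Or.inl (mem_GminusS.2 (Or.inr (Or.inr ⟨hxE0,
          p, rfl, r', harc1⟩))), Or.inl rfl⟩
    · rcases mem_GepsS.1 hB with ⟨y, r', heq, harc⟩ | ⟨heq, r', harc⟩ <;>
        simp only [Prod.mk.injEq] at heq
      · -- ([y], r, [x]) from G2'
        obtain ⟨hp', hr', hq'⟩ := heq
        subst hp'; subst hq'
        rw [← hr'] at harc
        have hxE0 : x ∈ E0 := cons_mem_nps.1 hq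
        have hyS2 : y ∈ S2 := by
          by_contra hy
          have hyS2' : ([y] : NP) ∈ nps S2' := hwS2' _ harc
          obtain ⟨hself, -⟩ := h24 [y] hyS2' (fun hc => hy (cons_mem_nps.1 hc))
          have := hself _ harc rfl
          simp only [Prod.mk.injEq] at this
          exact absurd this.2.2.symm (by simp)
        have harc1 : ([y], r, ([] : NP)) ∈ G2 := h23 _ harc (cons_mem_nps.2 hyS2) (nil_mem_nps _)
        exact mem_unionRS.2 ⟨Or.inr (mem_GepsS.2 (Or.inl ⟨y, r, rfl, harc1⟩)),
          Or.inr ⟨x, hxE0, rfl⟩⟩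
      · -- (ε, dec, [x]) from G2'
        obtain ⟨hp', hr', hq'⟩ := heq
        subst hp'; subst hq'; subst hr'
        have hxE0 : x ∈ E0 := cons_mem_nps.1 hq
        have harc1 : (([] : NP), r', ([] : NP)) ∈ G2 := h23 _ harc (nil_mem_nps _) (nil_mem_nps _)
        exact mem_unionRS.2 ⟨Or.inr (mem_GepsS.2 (Or.inr ⟨rfl, r', harc1⟩)),
          Or.inr ⟨x, hxE0, rfl⟩⟩
  · -- new sources
    intro z hz hznot
    have hzne : z ≠ [] := fun hc => hznot (hc ▸ nil_mem_nps _)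
    obtain ⟨w, hw, rfl⟩ : ∃ w, w ∈ S1' ∪ S2' ∧ z = [w] := by
      rcases mem_nps.1 hz with rfl | ⟨w, hw, rfl⟩
      · exact absurd rfl hzne
      · exact ⟨w, hw, rfl⟩
    have hwS1no : w ∉ S1 := fun hc => hznot (cons_mem_nps.2 (Set.mem_union_left _ hc))
    have hwS2no : w ∉ S2 := fun hc => hznot (cons_mem_nps.2 (Set.mem_union_right _ hc))
    -- every arc from [w] is the self eq arc, coming from G1'
    have key : ∀ r q, (([w], r, q) : Arc) ∈ unionRS E0' (GminusS x E0' G1') (GepsS x G2') →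
        r = Lab.eq ∧ q = [w] ∧ ([w], Lab.eq, [w]) ∈ G1' := by
      intro r q ha
      obtain ⟨hAB, -⟩ := mem_unionRS.1 ha
      rcases hAB with hA | hB
      · rcases mem_GminusS.1 hA with ⟨y, r', z', heq, harc⟩ | ⟨z', heq, r', harc⟩ |
          ⟨-, p2, heq, r', harc⟩ <;> simp only [Prod.mk.injEq] at heq
        · obtain ⟨hp', hr', hq'⟩ := heq
          have hyw : y = w := list_single_inj hp'.symm
          rw [hyw, ← hr'] at harc
          have hwS1'' : ([w] : NP) ∈ nps S1' := hwS1' _ harc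
          obtain ⟨hself, -⟩ := h14 [w] hwS1'' (fun hc => hwS1no (cons_mem_nps.1 hc))
          have hse := hself _ harc rfl
          simp only [Prod.mk.injEq] at hse
          obtain ⟨-, hre, hze⟩ := hse
          rw [hre, hze] at harc
          refine ⟨hre ▸ rfl, ?_, harc⟩
          rw [hq', hze]
        · exact absurd heq.1.symm (by simp [hzne])
        · obtain ⟨hp', hr', hq'⟩ := heq
          rw [← hp'] at harc
          have hwS1'' : ([w] : NP) ∈ nps S1' := hwS1' _ harc
          obtain ⟨hself, -⟩ := h14 [w] hwS1'' (fun hc => hwS1no (cons_mem_nps.1 hc))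
          have hse := hself _ harc rfl
          simp only [Prod.mk.injEq] at hse
          exact absurd hse.2.2 (by simp)
      · rcases mem_GepsS.1 hB with ⟨y, r', heq, harc⟩ | ⟨heq, r', harc⟩ <;>
          simp only [Prod.mk.injEq] at heq
        · obtain ⟨hp', hr', hq'⟩ := heq
          have hyw : y = w := list_single_inj hp'.symm
          rw [hyw, ← hr'] at harc
          have hwS2'' : ([w] : NP) ∈ nps S2' := hwS2' _ harc
          obtain ⟨hself, -⟩ := h24 [w] hwS2'' (fun hc => hwS2no (cons_mem_nps.1 hc))
          have hse := hself _ harc rfl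
          simp only [Prod.mk.injEq] at hse
          exact absurd hse.2.2.symm (by simp)
        · exact absurd heq.1.symm (by simp [hzne])
    constructor
    · rintro ⟨p, r, q⟩ ha haz
      simp only at haz
      rw [haz] at ha
      obtain ⟨hr, hq, -⟩ := key r q ha
      simp [haz, hr, hq]
    · intro hzz hztgt
      obtain ⟨-, -, hG1⟩ := key _ _ hzz
      -- [w] ∈ nps E0 and ([w], eq, [w]) ∈ G1' : contradiction via h14
      have hwE0 : w ∈ E0 := cons_mem_nps.1 hztgt
      have hwx : w ≠ x := by
        intro hwx
        have : ([w] : NP) ∈ nps T1' := hwT1' _ hG1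
        rw [hwx] at this
        exact hxT1' (cons_mem_nps.1 this)
      have hwT1v : ([w] : NP) ∈ nps T1v := by
        rw [hlam]
        exact cons_mem_nps.2 ⟨hwE0, by simp [hwx]⟩
      have hwS1'' : ([w] : NP) ∈ nps S1' := hwS1' _ hG1
      obtain ⟨-, hnt⟩ := h14 [w] hwS1'' (fun hc => hwS1no (cons_mem_nps.1 hc))
      exact hnt hG1 hwT1v
/- ===== Base graph well-formedness helpers ===== -/

lemma wfSrc_mono {G : ArcSet} {S S2 : Set NP} (h : wfSrc G S) (hs : S ⊆ S2) : wfSrc G S2 :=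
  fun a ha => hs (h a ha)
lemma wfTgt_mono {G : ArcSet} {T T2 : Set NP} (h : wfTgt G T) (hs : T ⊆ T2) : wfTgt G T2 :=
  fun a ha => hs (h a ha)

lemma wfSrc_idEq (s : Set String) : wfSrc (idEqS s) (nps s) := by
  rintro ⟨p, r, q⟩ ha
  exact (mem_idEqS_elim ha).1

lemma wfTgt_idEq (s : Set String) : wfTgt (idEqS s) (nps s) := by
  rintro ⟨p, r, q⟩ ha
  obtain ⟨h1, -, h3⟩ := mem_idEqS_elim ha
  simp only at h3 ⊢
  rw [h3]; exact h1

lemma cfree_idEq (s : Set String) : CFree (idEqS s) := by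
  rintro p q ⟨-, hd⟩
  rcases mem_idEqS.1 hd with h | ⟨y, hy, h⟩ <;> simp at h

lemma wfSrc_idDec (s : Set String) : wfSrc (idDecS s) (nps s) := by
  rintro ⟨p, r, q⟩ ha
  rcases mem_idDecS.1 ha with h | ⟨y, hy, h⟩ <;> simp only [Prod.mk.injEq] at h <;>
    obtain ⟨rfl, -, -⟩ := h
  · exact nil_mem_nps _
  · exact cons_mem_nps.2 hy

lemma wfTgt_idDec (s : Set String) : wfTgt (idDecS s) (nps s) := by
  rintro ⟨p, r, q⟩ ha
  rcases mem_idDecS.1 ha with h | ⟨y, hy, h⟩ <;> simp only [Prod.mk.injEq] at h <;>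
    obtain ⟨-, -, rfl⟩ := h
  · exact nil_mem_nps _
  · exact cons_mem_nps.2 hy

lemma cfree_idDec (s : Set String) : CFree (idDecS s) := by
  rintro p q ⟨he, hd⟩
  rcases mem_idDecS.1 he with h | ⟨y, hy, h⟩ <;> simp only [Prod.mk.injEq] at h
  · exact absurd h.2.1 (by simp)
  · obtain ⟨hp, -, hq⟩ := h
    rcases mem_idDecS.1 hd with h2 | ⟨y2, hy2, h2⟩ <;> simp only [Prod.mk.injEq] at h2
    · rw [h2.1] at hp; simp at hp
    · exact absurd h2.2.1 (by simp)

lemma wfSrc_varG {x : String} {s S : Set String} (hx : x ∈ S) :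
    wfSrc (varGraphS x s) (nps S) := by
  rintro ⟨p, r, q⟩ ha
  rcases mem_varGraphS.1 ha with h | ⟨y, hy, h⟩ <;> simp only [Prod.mk.injEq] at h <;>
    obtain ⟨rfl, -, -⟩ := h <;> exact cons_mem_nps.2 hx

lemma wfTgt_varG (x : String) (s : Set String) : wfTgt (varGraphS x s) (nps s) := by
  rintro ⟨p, r, q⟩ ha
  rcases mem_varGraphS.1 ha with h | ⟨y, hy, h⟩ <;> simp only [Prod.mk.injEq] at h <;>
    obtain ⟨-, -, rfl⟩ := h
  · exact nil_mem_nps _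
  · exact cons_mem_nps.2 hy

lemma cfree_varG (x : String) (s : Set String) : CFree (varGraphS x s) := by
  rintro p q ⟨he, hd⟩
  rcases mem_varGraphS.1 he with h | ⟨y, hy, h⟩ <;> simp only [Prod.mk.injEq] at h
  · obtain ⟨-, -, hq⟩ := h
    rcases mem_varGraphS.1 hd with h2 | ⟨y2, hy2, h2⟩ <;> simp only [Prod.mk.injEq] at h2
    · exact absurd h2.2.1 (by simp)
    · rw [h2.2.2] at hq; simp at hq
  · exact absurd h.2.1 (by simp)

lemma coe_fv_app (e1 e2 : Exp) :
    (↑(Exp.app e1 e2).fv : Set String) = ↑e1.fv ∪ ↑e2.fv := by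
  simp [Exp.fv]

lemma coe_fv_lam (x : String) (e : Exp) :
    (↑(Exp.lam x e).fv : Set String) = ↑e.fv \ {x} := by
  simp [Exp.fv]

lemma fv_app_left {e1 e2 : Exp} {y : String} (h : y ∈ e1.fv) : y ∈ (Exp.app e1 e2).fv := by
  simp [Exp.fv]; exact Or.inl h
lemma fv_app_right {e1 e2 : Exp} {y : String} (h : y ∈ e2.fv) : y ∈ (Exp.app e1 e2).fv := by
  simp [Exp.fv]; exact Or.inr h

lemma SRel_values_deriv {Γ : Grammar} {v' : ValE} {v : Val}
    (h : SRel Γ v'.toState v.toState) : Deriv Γ v'.toExp v.toExp := by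
  obtain ⟨x', e', ρ'⟩ := v'
  obtain ⟨x, e, ρ⟩ := v
  cases h with
  | mk hd _ _ => exact hd

/- ===== The simulation invariants ===== -/

def Peval (Γ : Grammar) (s : State) (v : Val) (G : ArcSet) : Prop :=
  ∀ e' ρ', SRel Γ (e', ρ') s →
    ∃ v' G', EvalX Γ (e', ρ') v' G' ∧ SRel Γ v'.toState v.toState ∧
      TRel (nps (fvE Γ e')) (nps (fvE Γ v'.toExp)) (nps ↑s.1.fv) (nps ↑v.toExp.fv) G' G ∧
      wfSrc G' (nps (fvE Γ e')) ∧ wfTgt G' (nps (fvE Γ v'.toExp)) ∧ CFree G'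

def Pcall (Γ : Grammar) (s s2 : State) (G : ArcSet) : Prop :=
  ∀ e' ρ', SRel Γ (e', ρ') s →
    ∃ e0' ρ0' G', SRel Γ (e0', ρ0') s2 ∧
      TRel (nps (fvE Γ e')) (nps (fvE Γ e0')) (nps ↑s.1.fv) (nps ↑s2.1.fv) G' G ∧
      wfSrc G' (nps (fvE Γ e')) ∧ wfTgt G' (nps (fvE Γ e0')) ∧ CFree G' ∧
      (CallXc Γ (e', ρ') (e0', ρ0') G' ∨
        ∃ sm Gn, CallXn Γ (e', ρ') sm Gn ∧ CallXc Γ sm (e0', ρ0') G' ∧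
          SRel Γ sm s ∧ compA Gn G' = G')

lemma sim_value (Γ : Grammar) (x : String) (e : Exp) (ρ : Env) :
    Peval Γ (Exp.lam x e, ρ) (Val.clos x e ρ) (idEqS ↑(Exp.lam x e).fv) := by
  intro e' ρ' hS
  cases hS with
  | mk hd henv hrel =>
    cases hd with
    | lam ht =>
      rename_i a
      refine ⟨ValE.clos x a ρ', idEqS (fvE Γ (ExpE.lam x a)), EvalX.value x a ρ', ?_, ?_, ?_, ?_, ?_⟩
      · exact SRel.mk (Deriv.lam ht) henv hrel
      · exact TRel_idEq (fv_subset_fvE (Deriv.lam ht)) (fv_subset_fvE (Deriv.lam ht))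
          (subset_refl _)
      · exact wfSrc_idEq _
      · exact wfTgt_idEq _
      · exact cfree_idEq _
    | nt hmem hdb =>
      rename_i A b
      cases hdb with
      | lam ht =>
        rename_i a
        have hEv : EvalX Γ (ExpE.nt A, ρ') (ValE.clos x a ρ')
            (compA (idEqS (fvE Γ (ExpE.lam x a))) (idEqS (fvE Γ (ExpE.lam x a)))) :=
          EvalX.resultN (CallXn.gram ρ' hmem) (EvalX.value x a ρ')
        rw [compA_idEq (wfSrc_idEq _) (cfree_idEq _)] at hEv
        refine ⟨ValE.clos x a ρ', idEqS (fvE Γ (ExpE.lam x a)), hEv, ?_, ?_, ?_, ?_, ?_⟩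
        · exact SRel.mk (Deriv.lam ht) henv hrel
        · exact TRel_idEq (fv_subset_fvE (Deriv.nt hmem (Deriv.lam ht)))
            (fv_subset_fvE (Deriv.lam ht)) (subset_refl _)
        · exact wfSrc_mono (wfSrc_idEq _) (nps_mono (fvE_nt hmem))
        · exact wfTgt_idEq _
        · exact cfree_idEq _
      | nt hmem2 hdb2 =>
        exact absurd rfl (Γ.no_nt_prod _ hmem _)

lemma sim_var (Γ : Grammar) {ρ : Env} {x : String} {v : Val} (h : ρ x = some v) :
    Peval Γ (Exp.var x, ρ) v (varGraphS x ↑v.toExp.fv) := by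
  intro e' ρ' hS
  cases hS with
  | mk hd henv hrel =>
    have hxfv : x ∈ (Exp.var x).fv := by simp [Exp.fv]
    cases hd with
    | var =>
      obtain ⟨h1, -⟩ := henv x hxfv
      obtain ⟨v', hv'⟩ := Option.isSome_iff_exists.1 h1
      have hSv : SRel Γ v'.toState v.toState := hrel x hxfv v' v hv' h
      refine ⟨v', varGraphS x (fvE Γ v'.toExp), EvalX.var hv', hSv, ?_, ?_, ?_, ?_⟩
      · exact TRel_varG (fv_subset_fvE (Deriv.var x))
          (fv_subset_fvE (SRel_values_deriv hSv)) hxfv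
      · exact wfSrc_varG (fv_subset_fvE (Deriv.var x) (by simpa using hxfv))
      · exact wfTgt_varG _ _
      · exact cfree_varG _ _
    | nt hmem hdb =>
      rename_i A b
      cases hdb with
      | var =>
        obtain ⟨h1, -⟩ := henv x hxfv
        obtain ⟨v', hv'⟩ := Option.isSome_iff_exists.1 h1
        have hSv : SRel Γ v'.toState v.toState := hrel x hxfv v' v hv' h
        have hEv : EvalX Γ (ExpE.nt A, ρ') v'
            (compA (idEqS (fvE Γ (ExpE.var x))) (varGraphS x (fvE Γ v'.toExp))) :=
          EvalX.resultN (CallXn.gram ρ' hmem) (EvalX.var hv')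
        rw [compA_idEq (wfSrc_varG (fv_subset_fvE (Deriv.var x) (by simpa using hxfv)))
          (cfree_varG _ _)] at hEv
        refine ⟨v', varGraphS x (fvE Γ v'.toExp), hEv, hSv, ?_, ?_, ?_, ?_⟩
        · exact TRel_varG (fv_subset_fvE (Deriv.nt hmem (Deriv.var x)))
            (fv_subset_fvE (SRel_values_deriv hSv)) hxfv
        · exact wfSrc_varG (fv_subset_fvE (Deriv.nt hmem (Deriv.var x)) (by simpa using hxfv))
        · exact wfTgt_varG _ _
        · exact cfree_varG _ _
      | nt hmem2 hdb2 =>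
        exact absurd rfl (Γ.no_nt_prod _ hmem _)
lemma sim_apply (Γ : Grammar) {s s2 : State} {v : Val} {Gc G : ArcSet}
    (hc : CallGc s s2 Gc) (he : EvalG s2 v G)
    (ihc : Pcall Γ s s2 Gc) (ihe : Peval Γ s2 v G) :
    Peval Γ s v (compA Gc G) := by
  intro e' ρ' hS
  obtain ⟨e0', ρ0', Gc', hS0, hT1, hwS1, hwT1, hcf1, hdisj⟩ := ihc e' ρ' hS
  obtain ⟨v', Gx', hEv, hSv, hT2, hwS2, hwT2, hcf2⟩ := ihe e0' ρ0' hS0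
  have hsc : SoundG Gc (mN s) (mN s2) := (pure_callc hc).2
  have hsx : SoundG G (mN s2) (mN v.toState) := (pure_eval he).2
  have hTR : TRel (nps (fvE Γ e')) (nps (fvE Γ v'.toExp)) (nps ↑s.1.fv)
      (nps ↑v.toExp.fv) (compA Gc' Gx') (compA Gc G) :=
    TRel_compA hT1 hT2 hwT1 hsc hsx
  have hwS : wfSrc (compA Gc' Gx') (nps (fvE Γ e')) := wfSrc_compA hwS1
  have hwT : wfTgt (compA Gc' Gx') (nps (fvE Γ v'.toExp)) := wfTgt_compA hwT2
  rcases hdisj with hcall | ⟨sm, Gn, hn, hcall, hSm, heqn⟩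
  · exact ⟨v', compA Gc' Gx', EvalX.resultC hcall hEv, hSv, hTR, hwS, hwT, cfree_compA _ _⟩
  · -- prefix with the →n step
    cases hn with
    | gram ρ'' hmem =>
      rename_i A b
      have hwGc' : wfSrc Gc' (nps (fvE Γ b)) := by
        intro a ha
        rw [← heqn] at ha
        obtain ⟨r, y, t, h1, -⟩ := compA_witness ha
        exact (mem_idEqS_elim h1).1
      have hEv2 : EvalX Γ (ExpE.nt A, ρ') v'
          (compA (idEqS (fvE Γ b)) (compA Gc' Gx')) :=
        EvalX.resultN (CallXn.gram ρ' hmem) (EvalX.resultC hcall hEv)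
      rw [compA_idEq (wfSrc_compA hwGc') (cfree_compA _ _)] at hEv2
      exact ⟨v', compA Gc' Gx', hEv2, hSv, hTR, hwS, hwT, cfree_compA _ _⟩

/-- The common core of the call case: an application already at the top. -/
lemma sim_call_core (Γ : Grammar) {e1 e2 : Exp} {ρ ρ0 : Env} {x : String} {e0 : Exp}
    {v2 : Val} {G1 G2 : ArcSet} {a1 a2 : ExpE} {ρ' : EnvE}
    (ih1 : Peval Γ (e1, ρ) (Val.clos x e0 ρ0) G1) (ih2 : Peval Γ (e2, ρ) v2 G2)
    (hd1 : Deriv Γ a1 e1) (hd2 : Deriv Γ a2 e2)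
    (henv : ∀ y ∈ (Exp.app e1 e2).fv, (ρ' y).isSome = true ∧ (ρ y).isSome = true)
    (hrel : ∀ y ∈ (Exp.app e1 e2).fv, ∀ (v' : ValE) (v : Val),
      ρ' y = some v' → ρ y = some v → SRel Γ v'.toState v.toState) :
    ∃ e0' ρ0' G', SRel Γ (e0', ρ0') (e0, Env.update ρ0 x v2) ∧
      TRel (nps (fvE Γ (ExpE.app a1 a2))) (nps (fvE Γ e0'))
        (nps ↑(Exp.app e1 e2).fv) (nps ↑e0.fv) G'
        (unionRS ↑e0.fv (GminusS x ↑e0.fv G1) (GepsS x G2)) ∧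
      wfSrc G' (nps (fvE Γ (ExpE.app a1 a2))) ∧ wfTgt G' (nps (fvE Γ e0')) ∧ CFree G' ∧
      CallXc Γ (ExpE.app a1 a2, ρ') (e0', ρ0') G' := by
  have hS1 : SRel Γ (a1, ρ') (e1, ρ) :=
    SRel.mk hd1 (fun y hy => henv y (fv_app_left hy))
      (fun y hy => hrel y (fv_app_left hy))
  have hS2 : SRel Γ (a2, ρ') (e2, ρ) :=
    SRel.mk hd2 (fun y hy => henv y (fv_app_right hy))
      (fun y hy => hrel y (fv_app_right hy))
  obtain ⟨v1', G1', hEv1, hSv1, hTR1, hwS1, hwT1, hcf1⟩ := ih1 a1 ρ' hS1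
  obtain ⟨v2', G2', hEv2, hSv2, hTR2, hwS2, hwT2, hcf2⟩ := ih2 a2 ρ' hS2
  obtain ⟨xv, b', ρ0''⟩ := v1'
  -- invert the S-relation between the two closures
  have hSv1' := hSv1
  cases hSv1' with
  | mk hdl henv0 hrel0 =>
    cases hdl with
    | lam hdb =>
      refine ⟨b', EnvE.update ρ0'' x v2', unionRS (fvE Γ b') (GminusS x (fvE Γ b') G1')
        (GepsS x G2'), ?_, ?_, ?_, ?_, ?_, CallXc.call hEv1 hEv2⟩
      · -- S-relation of the new states
        refine SRel.mk hdb ?_ ?_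
        · intro y hy
          by_cases hyx : y = x
          · subst hyx
            simp [EnvE.update, Env.update]
          · have hy0 : y ∈ (Exp.lam x e0).fv := by
              simp [Exp.fv]
              exact ⟨hy, hyx⟩
            have := henv0 y hy0
            simpa [EnvE.update, Env.update, hyx] using this
        · intro y hy w' w hw' hw
          by_cases hyx : y = x
          · subst hyx
            simp [EnvE.update, Env.update] at hw' hw
            rw [← hw', ← hw]
            exact hSv2
          · have hy0 : y ∈ (Exp.lam x e0).fv := by
              simp [Exp.fv]
              exact ⟨hy, hyx⟩
            simp [EnvE.update, Env.update, hyx] at hw' hw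
            exact hrel0 y hy0 w' w hw' hw
      · -- the TRel
        have hTC := TRel_call (x := x)
          (hT1 := hTR1) (hT2 := hTR2) (hwS1' := hwS1) (hwT1' := hwT1) (hwS2' := hwS2)
          (hxT1' := not_mem_fvE_lam Γ x b')
          (hlam := coe_fv_lam x e0)
          (hE0sub := fv_subset_fvE hdb)
        have hgoal : TRel (nps (fvE Γ (ExpE.app a1 a2))) (nps (fvE Γ b'))
            (nps ↑(Exp.app e1 e2).fv) (nps ↑e0.fv)
            (unionRS (fvE Γ b') (GminusS x (fvE Γ b') G1') (GepsS x G2'))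
            (unionRS ↑e0.fv (GminusS x ↑e0.fv G1) (GepsS x G2)) := by
          rw [fvE_app_eq hd1 hd2, coe_fv_app]
          exact hTC
        exact hgoal
      · exact wfSrc_call (wfSrc_mono hwS1 (nps_mono (fvE_app_left hd2)))
          (wfSrc_mono hwS2 (nps_mono (fvE_app_right hd1))) (nil_mem_nps _)
      · exact wfTgt_unionR
      · exact cfree_call hwT1 (fun hc => not_mem_fvE_lam Γ x b' (cons_mem_nps.1 hc)) hcf1 hcf2

lemma sim_call (Γ : Grammar) {e1 e2 : Exp} {ρ ρ0 : Env} {x : String} {e0 : Exp}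
    {v2 : Val} {G1 G2 : ArcSet}
    (h1 : EvalG (e1, ρ) (Val.clos x e0 ρ0) G1) (h2 : EvalG (e2, ρ) v2 G2)
    (ih1 : Peval Γ (e1, ρ) (Val.clos x e0 ρ0) G1) (ih2 : Peval Γ (e2, ρ) v2 G2) :
    Pcall Γ (Exp.app e1 e2, ρ) (e0, Env.update ρ0 x v2)
      (unionRS ↑e0.fv (GminusS x ↑e0.fv G1) (GepsS x G2)) := by
  intro e' ρ' hS
  cases hS with
  | mk hd henv hrel =>
    cases hd with
    | app hd1 hd2 =>
      rename_i a1 a2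
      obtain ⟨e0', ρ0', G', hS0, hTR, hwS, hwT, hcf, hcall⟩ :=
        sim_call_core Γ ih1 ih2 hd1 hd2 henv hrel
      exact ⟨e0', ρ0', G', hS0, hTR, hwS, hwT, hcf, Or.inl hcall⟩
    | nt hmem hdb =>
      rename_i A b
      cases hdb with
      | app hd1 hd2 =>
        rename_i a1 a2
        obtain ⟨e0', ρ0', G', hS0, hTR, hwS, hwT, hcf, hcall⟩ :=
          sim_call_core Γ ih1 ih2 hd1 hd2 henv hrel
        refine ⟨e0', ρ0', G', hS0, ?_, ?_, hwT, hcf, Or.inr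
          ⟨(ExpE.app a1 a2, ρ'), idEqS (fvE Γ (ExpE.app a1 a2)),
            CallXn.gram ρ' hmem, hcall, SRel.mk (Deriv.app hd1 hd2) henv hrel,
            compA_idEq hwS hcf⟩⟩
        · exact TRel_enlarge_src hTR hwS (fvE_nt hmem)
        · exact wfSrc_mono hwS (nps_mono (fvE_nt hmem))
      | nt hmem2 hdb2 =>
        exact absurd rfl (Γ.no_nt_prod _ hmem _)

lemma eval_sim (Γ : Grammar) {s : State} {v : Val} {G : ArcSet} (h : EvalG s v G) :
    Peval Γ s v G :=
  EvalG.rec (motive_1 := fun s v G _ => Peval Γ s v G)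
    (motive_2 := fun s s2 G _ => Pcall Γ s s2 G)
    (sim_value Γ) (fun h => sim_var Γ h)
    (fun hc he ihc ihe => sim_apply Γ hc he ihc ihe)
    (fun h1 h2 ih1 ih2 => sim_call Γ h1 h2 ih1 ih2) h

lemma call_sim (Γ : Grammar) {s s2 : State} {G : ArcSet} (h : CallGc s s2 G) :
    Pcall Γ s s2 G :=
  CallGc.rec (motive_1 := fun s v G _ => Peval Γ s v G)
    (motive_2 := fun s s2 G _ => Pcall Γ s s2 G)
    (sim_value Γ) (fun h => sim_var Γ h)
    (fun hc he ihc ihe => sim_apply Γ hc he ihc ihe)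
    (fun h1 h2 ih1 ih2 => sim_call Γ h1 h2 ih1 ih2) h
lemma coe_fv_sub_left (e1 e2 : Exp) : (↑e1.fv : Set String) ⊆ ↑(Exp.app e1 e2).fv := by
  intro y hy
  exact fv_app_left (by simpa using hy)

lemma coe_fv_sub_right (e1 e2 : Exp) : (↑e2.fv : Set String) ⊆ ↑(Exp.app e1 e2).fv := by
  intro y hy
  exact fv_app_right (by simpa using hy)

lemma CallGr_inv2 {e e0 : Exp} {ρ ρ0 : Env} {G : ArcSet}
    (h : CallGr (e, ρ) (e0, ρ0) G) :
    ∃ e2, e = Exp.app e0 e2 ∧ ρ0 = ρ ∧ G = idDecS ↑e0.fv := by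
  cases h with
  | oper e1 e2 ρ => exact ⟨e2, rfl, rfl, rfl⟩

lemma CallGd_inv2 {e e0 : Exp} {ρ ρ0 : Env} {G : ArcSet}
    (h : CallGd (e, ρ) (e0, ρ0) G) :
    ∃ e1 v1 G1, EvalG (e1, ρ) v1 G1 ∧ e = Exp.app e1 e0 ∧ ρ0 = ρ ∧
      G = idDecS ↑e0.fv := by
  cases h with
  | opnd e2 h1 => exact ⟨_, _, _, h1, rfl, rfl, rfl⟩

theorem simulation_property' (Γ : Grammar) :
    (∀ (e' : ExpE) (ρ' : EnvE) (e : Exp) (ρ : Env) (v : Val) (G : ArcSet),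
      SRel Γ (e', ρ') (e, ρ) → EvalG (e, ρ) v G →
      ∃ (v' : ValE) (G' : ArcSet),
        EvalX Γ (e', ρ') v' G' ∧ SRel Γ v'.toState v.toState ∧
        TRel (nps (fvE Γ e')) (nps (fvE Γ v'.toExp))
             (nps ↑(Exp.fv e)) (nps ↑(Exp.fv v.toExp)) G' G) ∧
    (∀ (k : CKind) (e' : ExpE) (ρ' : EnvE) (e : Exp) (ρ : Env)
       (e0 : Exp) (ρ0 : Env) (G : ArcSet),
      SRel Γ (e', ρ') (e, ρ) → CallGk k (e, ρ) (e0, ρ0) G →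
      ∃ (e0' : ExpE) (ρ0' : EnvE) (G' : ArcSet),
        SRel Γ (e0', ρ0') (e0, ρ0) ∧
        TRel (nps (fvE Γ e')) (nps (fvE Γ e0'))
             (nps ↑(Exp.fv e)) (nps ↑(Exp.fv e0)) G' G ∧
        (CallXk Γ k (e', ρ') (e0', ρ0') G' ∨
          ∃ (s : StateE) (Gn : ArcSet),
            CallXn Γ (e', ρ') s Gn ∧ CallXk Γ k s (e0', ρ0') G' ∧
            SRel Γ s (e, ρ) ∧ compA Gn G' = G')) := by
  constructor
  · intro e' ρ' e ρ v G hS hE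
    obtain ⟨v', G', hEv, hSv, hTR, -, -, -⟩ := eval_sim Γ hE e' ρ' hS
    exact ⟨v', G', hEv, hSv, hTR⟩
  · intro k e' ρ' e ρ e0 ρ0 G hS hC
    cases k
    · -- operator calls
      have hC' : CallGr (e, ρ) (e0, ρ0) G := hC
      obtain ⟨e2, rfl, rfl, rfl⟩ := CallGr_inv2 hC'
      cases hS with
      | mk hd henv hrel =>
        cases hd with
        | app hd1 hd2 =>
          rename_i a1 a2
          refine ⟨a1, ρ', idDecS (fvE Γ a1), ?_, ?_, Or.inl (CallXr.oper a1 a2 ρ')⟩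
          · exact SRel.mk hd1 (fun y hy => henv y (fv_app_left hy))
              (fun y hy => hrel y (fv_app_left hy))
          · exact TRel_idDec (fv_subset_fvE (Deriv.app hd1 hd2))
              (fv_subset_fvE hd1) (coe_fv_sub_left e0 e2)
        | nt hmem hdb =>
          rename_i A b
          cases hdb with
          | app hd1 hd2 =>
            rename_i a1 a2
            have hwf : wfSrc (idDecS (fvE Γ a1)) (nps (fvE Γ (ExpE.app a1 a2))) :=
              wfSrc_mono (wfSrc_idDec _) (nps_mono (fvE_app_left hd2))
            refine ⟨a1, ρ', idDecS (fvE Γ a1), ?_, ?_, Or.inr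
              ⟨(ExpE.app a1 a2, ρ'), idEqS (fvE Γ (ExpE.app a1 a2)),
                CallXn.gram ρ' hmem, CallXr.oper a1 a2 ρ',
                SRel.mk (Deriv.app hd1 hd2) henv hrel,
                compA_idEq hwf (cfree_idDec _)⟩⟩
            · exact SRel.mk hd1 (fun y hy => henv y (fv_app_left hy))
                (fun y hy => hrel y (fv_app_left hy))
            · exact TRel_enlarge_src (TRel_idDec (fv_subset_fvE (Deriv.app hd1 hd2))
                (fv_subset_fvE hd1) (coe_fv_sub_left e0 e2)) hwf (fvE_nt hmem)
          | nt hmem2 hdb2 =>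
            exact absurd rfl (Γ.no_nt_prod _ hmem _)
    · -- operand calls
      have hC' : CallGd (e, ρ) (e0, ρ0) G := hC
      obtain ⟨e1, v1, G1, h1, rfl, rfl, rfl⟩ := CallGd_inv2 hC'
      cases hS with
      | mk hd henv hrel =>
        cases hd with
        | app hd1 hd2 =>
          rename_i a1 a2
          have hS1 : SRel Γ (a1, ρ') (e1, ρ0) :=
            SRel.mk hd1 (fun y hy => henv y (fv_app_left hy))
              (fun y hy => hrel y (fv_app_left hy))
          obtain ⟨v1', G1', hEv1, -, -, -, -, -⟩ := eval_sim Γ h1 a1 ρ' hS1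
          refine ⟨a2, ρ', idDecS (fvE Γ a2), ?_, ?_, Or.inl (CallXd.opnd a2 hEv1)⟩
          · exact SRel.mk hd2 (fun y hy => henv y (fv_app_right hy))
              (fun y hy => hrel y (fv_app_right hy))
          · exact TRel_idDec (fv_subset_fvE (Deriv.app hd1 hd2))
              (fv_subset_fvE hd2) (coe_fv_sub_right e1 e0)
        | nt hmem hdb =>
          rename_i A b
          cases hdb with
          | app hd1 hd2 =>
            rename_i a1 a2
            have hS1 : SRel Γ (a1, ρ') (e1, ρ0) :=
              SRel.mk hd1 (fun y hy => henv y (fv_app_left hy))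
                (fun y hy => hrel y (fv_app_left hy))
            obtain ⟨v1', G1', hEv1, -, -, -, -, -⟩ := eval_sim Γ h1 a1 ρ' hS1
            have hwf : wfSrc (idDecS (fvE Γ a2)) (nps (fvE Γ (ExpE.app a1 a2))) :=
              wfSrc_mono (wfSrc_idDec _) (nps_mono (fvE_app_right hd1))
            refine ⟨a2, ρ', idDecS (fvE Γ a2), ?_, ?_, Or.inr
              ⟨(ExpE.app a1 a2, ρ'), idEqS (fvE Γ (ExpE.app a1 a2)),
                CallXn.gram ρ' hmem, CallXd.opnd a2 hEv1,
                SRel.mk (Deriv.app hd1 hd2) henv hrel,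
                compA_idEq hwf (cfree_idDec _)⟩⟩
            · exact SRel.mk hd2 (fun y hy => henv y (fv_app_right hy))
                (fun y hy => hrel y (fv_app_right hy))
            · exact TRel_enlarge_src (TRel_idDec (fv_subset_fvE (Deriv.app hd1 hd2))
                (fv_subset_fvE hd2) (coe_fv_sub_right e1 e0)) hwf (fvE_nt hmem)
          | nt hmem2 hdb2 =>
            exact absurd rfl (Γ.no_nt_prod _ hmem _)
    · -- c-calls
      have hC' : CallGc (e, ρ) (e0, ρ0) G := hC
      obtain ⟨e0', ρ0', G', hS0, hTR, -, -, -, hdisj⟩ := call_sim Γ hC' e' ρ' hS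
      refine ⟨e0', ρ0', G', hS0, hTR, ?_⟩
      rcases hdisj with hcall | ⟨sm, Gn, hn, hcall, hSm, heq⟩
      · exact Or.inl hcall
      · exact Or.inr ⟨sm, Gn, hn, hcall, hSm, heq⟩
/-- Simulation property: evaluations and calls of the pure graph-generating
environment semantics are simulated, from `S`-related states, by the extended
graph-generating environment semantics, with `T`-related size-change graphs;
a pure call may be matched by a single call of the same kind or by an `→n`
call followed by a call of the same kind (whose composite graph has the same
arcs as the second graph). -/
theorem simulation_property (Γ : Grammar) :
    (∀ (e' : ExpE) (ρ' : EnvE) (e : Exp) (ρ : Env) (v : Val) (G : ArcSet),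
      SRel Γ (e', ρ') (e, ρ) → EvalG (e, ρ) v G →
      ∃ (v' : ValE) (G' : ArcSet),
        EvalX Γ (e', ρ') v' G' ∧ SRel Γ v'.toState v.toState ∧
        TRel (nps (fvE Γ e')) (nps (fvE Γ v'.toExp))
             (nps ↑(Exp.fv e)) (nps ↑(Exp.fv v.toExp)) G' G) ∧
    (∀ (k : CKind) (e' : ExpE) (ρ' : EnvE) (e : Exp) (ρ : Env)
       (e0 : Exp) (ρ0 : Env) (G : ArcSet),
      SRel Γ (e', ρ') (e, ρ) → CallGk k (e, ρ) (e0, ρ0) G →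
      ∃ (e0' : ExpE) (ρ0' : EnvE) (G' : ArcSet),
        SRel Γ (e0', ρ0') (e0, ρ0) ∧
        TRel (nps (fvE Γ e')) (nps (fvE Γ e0'))
             (nps ↑(Exp.fv e)) (nps ↑(Exp.fv e0)) G' G ∧
        (CallXk Γ k (e', ρ') (e0', ρ0') G' ∨
          ∃ (s : StateE) (Gn : ArcSet),
            CallXn Γ (e', ρ') s Gn ∧ CallXk Γ k s (e0', ρ0') G' ∧
            SRel Γ s (e, ρ) ∧ compA Gn G' = G')) := by
  exact simulation_property' Γ
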